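/- Every time-deterministic guarded closed process P of the basic calculus provably satisfies a time-deterministic, prioritized, standard, guarded and closed equation set. -/

import Mathlib

namespace DTCalc

inductive Act where
  | tau : Act
  | vis : ℕ → Act
  | delta : Act
deriving DecidableEq

/-- `γ` is (the visible action of) a member of `S`. -/
def Act.inSet (γ : Act) (S : Set ℕ) : Prop :=
  ∃ a, γ = Act.vis a ∧ a ∈ S

inductive Expr where
  | nil : Expr
  | one : Expr                      -- the terminated process 𝟙
  | var : ℕ → Expr
  | pre : Act → Expr → Expr         -- basic prefix γ.E
  | tpre : Act → Expr → Expr        -- timed prefix γᵗ.E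
  | sum : Expr → Expr → Expr        -- basic choice E + F
  | tcho : Expr → Expr → Expr       -- timed choice E +ᵗ F
  | recur : ℕ → Expr → Expr         -- rec X.E
  | pri : Expr → Expr               -- priority scope
  | vis : Expr → Expr               -- auxiliary vis(E)
  | hide : Set ℕ → Expr → Expr      -- hiding E / L
  | par : Set ℕ → Expr → Expr → Expr      -- CSP parallel E ∥_S F
  | lmerge : Set ℕ → Expr → Expr → Expr   -- left merge
  | smerge : Set ℕ → Expr → Expr → Expr   -- synchronization merge

def subst : Expr → ℕ → Expr → Expr
  | .nil, _, _ => .nil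
  | .one, _, _ => .one
  | .var m, x, F => if m = x then F else .var m
  | .pre γ E, x, F => .pre γ (subst E x F)
  | .tpre γ E, x, F => .tpre γ (subst E x F)
  | .sum E G, x, F => .sum (subst E x F) (subst G x F)
  | .tcho E G, x, F => .tcho (subst E x F) (subst G x F)
  | .recur y E, x, F => if y = x then .recur y E else .recur y (subst E x F)
  | .pri E, x, F => .pri (subst E x F)
  | .vis E, x, F => .vis (subst E x F)
  | .hide L E, x, F => .hide L (subst E x F)
  | .par S E G, x, F => .par S (subst E x F) (subst G x F)
  | .lmerge S E G, x, F => .lmerge S (subst E x F) (subst G x F)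
  | .smerge S E G, x, F => .smerge S (subst E x F) (subst G x F)

def free : Expr → ℕ → Prop
  | .nil, _ => False
  | .one, _ => False
  | .var m, x => m = x
  | .pre _ E, x => free E x
  | .tpre _ E, x => free E x
  | .sum E G, x => free E x ∨ free G x
  | .tcho E G, x => free E x ∨ free G x
  | .recur y E, x => x ≠ y ∧ free E x
  | .pri E, x => free E x
  | .vis E, x => free E x
  | .hide _ E, x => free E x
  | .par _ E G, x => free E x ∨ free G x
  | .lmerge _ E G, x => free E x ∨ free G x
  | .smerge _ E G, x => free E x ∨ free G x

def Closed (E : Expr) : Prop := ∀ x, ¬ free E x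

/-- Standard (non-δ) transitions; these never depend on δ-transitions. -/
inductive StepStd : Expr → Act → Expr → Prop where
  | pre {α : Act} (h : α ≠ Act.delta) (E : Expr) : StepStd (.pre α E) α E
  | tpre {α : Act} (h : α ≠ Act.delta) (E : Expr) : StepStd (.tpre α E) α E
  | sumL {P α P'} (Q : Expr) : StepStd P α P' → StepStd (.sum P Q) α P'
  | sumR {Q α Q'} (P : Expr) : StepStd Q α Q' → StepStd (.sum P Q) α Q'
  | tchoL {P α P'} (Q : Expr) : StepStd P α P' → StepStd (.tcho P Q) α P'
  | tchoR {Q α Q'} (P : Expr) : StepStd Q α Q' → StepStd (.tcho P Q) α Q'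
  | unf {x E γ P'} : StepStd (subst E x (.recur x E)) γ P' → StepStd (.recur x E) γ P'
  | pri {P α P'} : StepStd P α P' → StepStd (.pri P) α P'
  | parL {S P α P'} (Q : Expr) (h : ¬ Act.inSet α S) :
      StepStd P α P' → StepStd (.par S P Q) α (.par S P' Q)
  | parR {S Q α Q'} (P : Expr) (h : ¬ Act.inSet α S) :
      StepStd Q α Q' → StepStd (.par S P Q) α (.par S P Q')
  | parS {S P Q a P' Q'} (h : a ∈ S) :
      StepStd P (.vis a) P' → StepStd Q (.vis a) Q' →
      StepStd (.par S P Q) (.vis a) (.par S P' Q')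
  | hideIn {L P a P'} (h : a ∈ L) :
      StepStd P (.vis a) P' → StepStd (.hide L P) Act.tau (.hide L P')
  | hideOut {L P α P'} (h : ¬ Act.inSet α L) :
      StepStd P α P' → StepStd (.hide L P) α (.hide L P')
  | visA {P a P'} : StepStd P (.vis a) P' → StepStd (.vis P) (.vis a) P'
  | visT {P P'' a P'} : StepStd P Act.tau P'' → StepStd (.vis P'') (.vis a) P' →
      StepStd (.vis P) (.vis a) P'
  | lm {S P α P'} (Q : Expr) (h : ¬ Act.inSet α S) :
      StepStd P α P' → StepStd (.lmerge S P Q) α (.par S P' Q)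
  | sm {S P Q a P' Q'} (h : a ∈ S) :
      StepStd (.vis P) (.vis a) P' → StepStd (.vis Q) (.vis a) Q' →
      StepStd (.smerge S P Q) (.vis a) (.par S P' Q')

def CanTau (P : Expr) : Prop := ∃ P', StepStd P Act.tau P'

/-- δ ("tick") transitions (stratified: negative premises refer to standard
transitions only). -/
inductive StepDel : Expr → Expr → Prop where
  | one : StepDel .one .one
  | pre (E : Expr) : StepDel (.pre Act.delta E) E
  | tpreD (E : Expr) : StepDel (.tpre Act.delta E) E
  | tpreV (a : ℕ) (E : Expr) : StepDel (.tpre (Act.vis a) E) (.tpre (Act.vis a) E)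
  | sumL {P P'} (Q : Expr) : StepDel P P' → ¬ CanTau Q → StepDel (.sum P Q) P'
  | sumR {Q Q'} (P : Expr) : StepDel Q Q' → ¬ CanTau P → StepDel (.sum P Q) Q'
  | tcho {P P' Q Q'} : StepDel P P' → StepDel Q Q' → StepDel (.tcho P Q) (.tcho P' Q')
  | par {S : Set ℕ} {P P' Q Q'} : StepDel P P' → StepDel Q Q' →
      StepDel (.par S P Q) (.par S P' Q')
  | hide {L : Set ℕ} {P P'} (h : ∀ a ∈ L, ¬ ∃ P'', StepStd P (Act.vis a) P'') :
      StepDel P P' → StepDel (.hide L P) (.hide L P')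
  | unf {x E P'} : StepDel (subst E x (.recur x E)) P' → StepDel (.recur x E) P'
  | sm {S : Set ℕ} {P P' Q Q'} : StepDel P P' → StepDel Q Q' →
      StepDel (.smerge S P Q) (.par S P' Q')

/-- The full transition relation. -/
def Step (P : Expr) (γ : Act) (Q : Expr) : Prop :=
  if γ = Act.delta then StepDel P Q else StepStd P γ Q

def TauStar : Expr → Expr → Prop :=
  Relation.ReflTransGen (fun P Q => Step P Act.tau Q)

def Weak (P : Expr) (γ : Act) (Q : Expr) : Prop :=
  ∃ P₁ P₂, TauStar P P₁ ∧ Step P₁ γ P₂ ∧ TauStar P₂ Q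

def WeakHat (P : Expr) (γ : Act) (Q : Expr) : Prop :=
  if γ = Act.tau then TauStar P Q else Weak P γ Q

def IsWeakBisim (β : Expr → Expr → Prop) : Prop :=
  ∀ P Q, β P Q →
    (∀ γ P', Step P γ P' → ∃ Q', WeakHat Q γ Q' ∧ β P' Q') ∧
    (∀ γ Q', Step Q γ Q' → ∃ P', WeakHat P γ P' ∧ β P' Q')

/-- Weak bisimilarity `≈`. -/
def WBisim (P Q : Expr) : Prop := ∃ β, IsWeakBisim β ∧ β P Q

/-- Rooted time weak bisimulations. -/
def IsRTWB (β : Expr → Expr → Prop) : Prop :=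
  ∀ P Q, β P Q →
    (∀ α P', α ≠ Act.delta → Step P α P' → ∃ Q', Weak Q α Q' ∧ WBisim P' Q') ∧
    (∀ P', Step P Act.delta P' → ∃ Q', Step Q Act.delta Q' ∧ β P' Q') ∧
    (∀ α Q', α ≠ Act.delta → Step Q α Q' → ∃ P', Weak P α P' ∧ WBisim P' Q') ∧
    (∀ Q', Step Q Act.delta Q' → ∃ P', Step P Act.delta P' ∧ β P' Q')

/-- Time observational congruence `≃_T`. -/
def TObsCong (P Q : Expr) : Prop := ∃ β, IsRTWB β ∧ β P Q

def Reach : Expr → Expr → Prop :=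
  Relation.ReflTransGen (fun P Q => ∃ γ, Step P γ Q)

/-- Every reachable state has at most one outgoing δ transition. -/
def TimeDet (P : Expr) : Prop :=
  ∀ Q, Reach P Q → ∀ Q₁ Q₂, Step Q Act.delta Q₁ → Step Q Act.delta Q₂ → Q₁ = Q₂

/-- Terms of the basic calculus extended with the static operators ∥_S and /L. -/
def InStatic : Expr → Prop
  | .nil => True
  | .var _ => True
  | .pre _ E => InStatic E
  | .sum E F => InStatic E ∧ InStatic F
  | .recur _ E => InStatic E
  | .par _ E F => InStatic E ∧ InStatic F
  | .hide _ E => InStatic E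
  | _ => False

/-- Terms of the (specification level) discrete time calculus. -/
def InDT : Expr → Prop
  | .nil => True
  | .one => True
  | .var _ => True
  | .tpre _ E => InDT E
  | .tcho E F => InDT E ∧ InDT F
  | .par _ E F => InDT E ∧ InDT F
  | .hide _ E => InDT E
  | .recur _ E => InDT E
  | _ => False

/-- Terms of the basic calculus. -/
def Basic : Expr → Prop
  | .nil => True
  | .var _ => True
  | .pre _ E => Basic E
  | .sum E F => Basic E ∧ Basic F
  | .recur _ E => Basic E
  | _ => False

/-- Some free occurrence of `x` is fully unguarded (not under any prefix). -/
def FUVar : Expr → ℕ → Prop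
  | .var m, x => m = x
  | .sum E F, x => FUVar E x ∨ FUVar F x
  | .tcho E F, x => FUVar E x ∨ FUVar F x
  | .par _ E F, x => FUVar E x ∨ FUVar F x
  | .lmerge _ E F, x => FUVar E x ∨ FUVar F x
  | .smerge _ E F, x => FUVar E x ∨ FUVar F x
  | .hide _ E, x => FUVar E x
  | .pri E, x => FUVar E x
  | .vis E, x => FUVar E x
  | .recur y E, x => y ≠ x ∧ FUVar E x
  | _, _ => False

/-- Every free occurrence of `x` in `E` is (strongly) guarded. -/
def GVar : Expr → ℕ → Prop
  | .nil, _ => True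
  | .one, _ => True
  | .var m, x => m ≠ x
  | .pre γ E, x => γ = Act.tau → GVar E x
  | .tpre γ E, x => γ = Act.tau → GVar E x
  | .sum E F, x => GVar E x ∧ GVar F x
  | .tcho E F, x => GVar E x ∧ GVar F x
  | .recur y E, x => y ≠ x → GVar E x
  | .pri E, x => GVar E x
  | .vis E, x => GVar E x
  | .hide _ E, x => GVar E x
  | .par _ E F, x => GVar E x ∧ GVar F x
  | .lmerge _ E F, x => GVar E x ∧ GVar F x
  | .smerge _ E F, x => GVar E x ∧ GVar F x

def Guarded : Expr → Prop
  | .nil => True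
  | .one => True
  | .var _ => True
  | .pre _ E => Guarded E
  | .tpre _ E => Guarded E
  | .sum E F => Guarded E ∧ Guarded F
  | .tcho E F => Guarded E ∧ Guarded F
  | .recur y E => GVar E y ∧ Guarded E
  | .pri E => Guarded E
  | .vis E => Guarded E
  | .hide _ E => Guarded E
  | .par _ E F => Guarded E ∧ Guarded F
  | .lmerge _ E F => Guarded E ∧ Guarded F
  | .smerge _ E F => Guarded E ∧ Guarded F

/-- `x` is serial in `E` : every subexpression containing `x` free, apart from
`x` itself, is of the form γ.F, F + G or rec Y.F. -/
def SerialVar : Expr → ℕ → Prop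
  | .nil, _ => True
  | .one, _ => True
  | .var _, _ => True
  | .pre _ E, x => SerialVar E x
  | .sum E F, x => SerialVar E x ∧ SerialVar F x
  | .recur y E, x => y = x ∨ SerialVar E x
  | .pri E, x => ¬ free E x
  | .vis E, x => ¬ free E x
  | .tpre _ E, x => ¬ free E x
  | .hide _ E, x => ¬ free E x
  | .tcho E F, x => ¬ free E x ∧ ¬ free F x
  | .par _ E F, x => ¬ free E x ∧ ¬ free F x
  | .lmerge _ E F, x => ¬ free E x ∧ ¬ free F x
  | .smerge _ E F, x => ¬ free E x ∧ ¬ free F x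

/-- Simultaneous substitution of closed terms for free variables. -/
def msubst : Expr → (ℕ → Expr) → Expr
  | .nil, _ => .nil
  | .one, _ => .one
  | .var m, σ => σ m
  | .pre γ E, σ => .pre γ (msubst E σ)
  | .tpre γ E, σ => .tpre γ (msubst E σ)
  | .sum E F, σ => .sum (msubst E σ) (msubst F σ)
  | .tcho E F, σ => .tcho (msubst E σ) (msubst F σ)
  | .recur y E, σ => .recur y (msubst E (Function.update σ y (.var y)))
  | .pri E, σ => .pri (msubst E σ)
  | .vis E, σ => .vis (msubst E σ)
  | .hide L E, σ => .hide L (msubst E σ)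
  | .par S E F, σ => .par S (msubst E σ) (msubst F σ)
  | .lmerge S E F, σ => .lmerge S (msubst E σ) (msubst F σ)
  | .smerge S E F, σ => .smerge S (msubst E σ) (msubst F σ)

/-- Time observational congruence on open terms (via closed substitutions). -/
def TObsCongO (E F : Expr) : Prop :=
  ∀ σ : ℕ → Expr, (∀ n, Closed (σ n)) → TObsCong (msubst E σ) (msubst F σ)

/-- The axiom system 𝒜_DT. -/
inductive ProvDT : Expr → Expr → Prop where
  | refl (E) : ProvDT E E
  | symm {E F} : ProvDT E F → ProvDT F E
  | trans {E F G} : ProvDT E F → ProvDT F G → ProvDT E G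
  | congPre (γ) {E F} : ProvDT E F → ProvDT (.pre γ E) (.pre γ F)
  | congTPre (γ) {E F} : ProvDT E F → ProvDT (.tpre γ E) (.tpre γ F)
  | congSum {E E' F F'} : ProvDT E E' → ProvDT F F' → ProvDT (.sum E F) (.sum E' F')
  | congTCho {E E' F F'} : ProvDT E E' → ProvDT F F' → ProvDT (.tcho E F) (.tcho E' F')
  | congRec (x) {E F} : ProvDT E F → ProvDT (.recur x E) (.recur x F)
  | congPri {E F} : ProvDT E F → ProvDT (.pri E) (.pri F)
  | congVis {E F} : ProvDT E F → ProvDT (.vis E) (.vis F)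
  | congHide (L) {E F} : ProvDT E F → ProvDT (.hide L E) (.hide L F)
  | congPar (S) {E E' F F'} : ProvDT E E' → ProvDT F F' → ProvDT (.par S E F) (.par S E' F')
  | congLM (S) {E E' F F'} : ProvDT E E' → ProvDT F F' → ProvDT (.lmerge S E F) (.lmerge S E' F')
  | congSM (S) {E E' F F'} : ProvDT E E' → ProvDT F F' → ProvDT (.smerge S E F) (.smerge S E' F')
  | a1 (E F) : ProvDT (.sum E F) (.sum F E)
  | a2 (E F G) : ProvDT (.sum (.sum E F) G) (.sum E (.sum F G))
  | a3 (E) : ProvDT (.sum E E) E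
  | a4 (E) : ProvDT (.sum E .nil) E
  | tau1' {α} (h : α ≠ Act.delta) (E) : ProvDT (.pre α (.pre Act.tau E)) (.pre α E)
  | tau2 (E) : ProvDT (.sum E (.pre Act.tau E)) (.pre Act.tau E)
  | tau3' {α} (h : α ≠ Act.delta) (E F) :
      ProvDT (.sum (.pre α (.sum E (.pre Act.tau F))) (.pre α F))
             (.pre α (.sum E (.pre Act.tau F)))
  | tau4 {α} (h : α ≠ Act.delta) {x F} (hs : SerialVar F x) (E) :
      ProvDT (.pre α (subst F x (.pre Act.delta (.pre Act.tau E))))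
             (.pre α (subst F x (.pre Act.delta E)))
  | pri1 : ProvDT (.pri .nil) .nil
  | pri2 {α} (h : α ≠ Act.delta) (E) : ProvDT (.pri (.pre α E)) (.pre α E)
  | pri3 (E) : ProvDT (.pri (.pre Act.delta E)) .nil
  | pri4 (E F) : ProvDT (.pri (.sum E F)) (.sum (.pri E) (.pri F))
  | pri5 (E) : ProvDT (.pri (.pri E)) (.pri E)
  | pri6 (E F) : ProvDT (.sum (.pre Act.tau E) F) (.sum (.pre Act.tau E) (.pri F))
  | rec1 (x E) : ProvDT (.recur x E) (subst E x (.recur x E))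
  | rec2 {x E F} (hs : SerialVar E x) (hg : GVar E x) :
      ProvDT F (subst E x F) → ProvDT F (.recur x E)
  | ung1 (x E) : ProvDT (.recur x (.sum (.var x) E)) (.recur x E)
  | ung2 (x E) :
      ProvDT (.recur x (.sum (.pre Act.tau (.var x)) E)) (.recur x (.pre Act.tau (.pri E)))
  | ung3 (x E F) :
      ProvDT (.recur x (.sum (.pre Act.tau (.sum (.var x) E)) F))
             (.recur x (.sum (.sum (.pre Act.tau (.var x)) E) F))
  | ung4 (x E F) :
      ProvDT (.recur x (.sum (.pre Act.tau (.sum (.pri (.var x)) E)) F))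
             (.recur x (.sum (.sum (.pre Act.tau (.var x)) E) F))
  | ter (x : ℕ) : ProvDT .one (.recur x (.pre Act.delta (.var x)))
  | tpre1 {α} (h : α ≠ Act.delta) {x E} (hx : ¬ free E x) :
      ProvDT (.tpre α E) (.recur x (.sum (.pre Act.delta (.var x)) (.pre α E)))
  | tpre2 (E) : ProvDT (.tpre Act.delta E) (.pre Act.delta E)
  | tch1 (E F) : ProvDT (.tcho E F) (.tcho F E)
  | tch2 (E F G) : ProvDT (.tcho (.tcho E F) G) (.tcho E (.tcho F G))
  | tch3 (E) : ProvDT (.tcho E .one) E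
  | tch4 (E F) : ProvDT (.pri (.tcho E F)) (.sum (.pri E) (.pri F))
  | tch5 (E F) : ProvDT (.tcho (.pri E) F) (.sum (.pri E) (.pri F))
  | tch6 (E F) : ProvDT (.tcho (.pre Act.delta E) (.pre Act.delta F)) (.pre Act.delta (.tcho E F))
  | tch7 (E F G) : ProvDT (.tcho (.sum E F) G) (.sum (.tcho E G) (.tcho F G))
  | hi1 (L) : ProvDT (.hide L .nil) .nil
  | hi2 {γ} {L : Set ℕ} (h : ¬ Act.inSet γ L) (E) :
      ProvDT (.hide L (.pre γ E)) (.pre γ (.hide L E))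
  | hi3 {a : ℕ} {L : Set ℕ} (h : a ∈ L) (E) :
      ProvDT (.hide L (.pre (Act.vis a) E)) (.pre Act.tau (.hide L E))
  | hi4 (L E F) : ProvDT (.hide L (.sum E F)) (.sum (.hide L E) (.hide L F))
  | recHi {x E} (hs : SerialVar E x) (L) :
      ProvDT (.hide L (.recur x E)) (.recur x (.hide L E))
  | vis1 : ProvDT (.vis .nil) .nil
  | vis2 (a E) : ProvDT (.vis (.pre (Act.vis a) E)) (.pre (Act.vis a) E)
  | vis3 (E F) : ProvDT (.vis (.sum E F)) (.sum (.vis E) (.vis F))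
  | parAx (S E F) :
      ProvDT (.par S E F) (.sum (.sum (.lmerge S E F) (.lmerge S F E)) (.smerge S E F))
  | lm1 (S E) : ProvDT (.lmerge S .nil E) .nil
  | lm2 {γ} {S : Set ℕ} (h : Act.inSet γ S ∨ γ = Act.delta) (E F) :
      ProvDT (.lmerge S (.pre γ E) F) .nil
  | lm3 {α} {S : Set ℕ} (h1 : α ≠ Act.delta) (h2 : ¬ Act.inSet α S) (E F) :
      ProvDT (.lmerge S (.pre α E) F) (.pre α (.par S E F))
  | lm4 (S E F G) :
      ProvDT (.lmerge S (.sum E F) G) (.sum (.lmerge S E G) (.lmerge S F G))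
  | sm1 (S E F) : ProvDT (.smerge S E F) (.smerge S F E)
  | sm2 (S E) : ProvDT (.smerge S .nil E) .nil
  | sm3 {γ γ'} {S : Set ℕ} (h : ¬ (Act.inSet γ S ∨ γ = Act.delta) ∨ γ ≠ γ')
      (h1 : γ ≠ Act.tau) (h2 : γ' ≠ Act.tau) (E F) :
      ProvDT (.smerge S (.pre γ E) (.pre γ' F)) .nil
  | sm4 (S E F) : ProvDT (.smerge S (.pre Act.tau E) F) (.pri (.smerge S E F))
  | sm5 {γ} {S : Set ℕ} (h : Act.inSet γ S ∨ γ = Act.delta) (E F) :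
      ProvDT (.smerge S (.pre γ E) (.pre γ F)) (.pre γ (.par S E F))
  | sm6 (S E F G) :
      ProvDT (.smerge S (.sum (.pri E) (.pri F)) G)
             (.sum (.smerge S (.pri E) G) (.smerge S (.pri F) G))
  | sm7 (S E F G) :
      ProvDT (.smerge S (.sum (.pre Act.delta E) (.vis F)) G)
             (.sum (.smerge S (.pre Act.delta E) G) (.smerge S (.vis F) G))

/-- Standard equation sets. -/
structure StdEqSet (n : ℕ) where
  pres : Fin n → List (Act × Fin n)
  frees : Fin n → List ℕ
  frees_ge : ∀ i, ∀ w ∈ frees i, n ≤ w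

def instBody {n : ℕ} (S : StdEqSet n) (Es : Fin n → Expr) (i : Fin n) : Expr :=
  (S.pres i).foldr (fun p acc => Expr.sum (Expr.pre p.1 (Es p.2)) acc)
    ((S.frees i).foldr (fun w acc => Expr.sum (Expr.var w) acc) Expr.nil)

def ProvSatDT {n : ℕ} (hn : 0 < n) (E : Expr) (S : StdEqSet n) : Prop :=
  ∃ Es : Fin n → Expr, Es ⟨0, hn⟩ = E ∧
    (∀ i x, free (Es i) x → n ≤ x) ∧
    (∀ i, ProvDT (Es i) (instBody S Es i))

def Prioritized {n : ℕ} (S : StdEqSet n) : Prop :=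
  ∀ i, (∃ j, (Act.tau, j) ∈ S.pres i) → ∀ j, (Act.delta, j) ∉ S.pres i

def EqGuarded {n : ℕ} (S : StdEqSet n) : Prop :=
  ∀ i : Fin n, ¬ Relation.TransGen (fun i j : Fin n => (Act.tau, j) ∈ S.pres i) i i

/-- Each equation has at most one δ summand. -/
def TimeDetSet {n : ℕ} (S : StdEqSet n) : Prop :=
  ∀ i, ((S.pres i).filter (fun p => decide (p.1 = Act.delta))).length ≤ 1

def ClosedSet {n : ℕ} (S : StdEqSet n) : Prop := ∀ i, S.frees i = []

/-! ### Auxiliary development -/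

section Aux

open Classical

theorem subst_of_not_free {E : Expr} {x : ℕ} (B : Expr) (h : ¬ free E x) :
    subst E x B = E := by
  induction E with
  | nil => rfl
  | one => rfl
  | var m =>
      simp only [free] at h
      simp [subst, h]
  | pre γ E ih => simp only [free] at h; simp [subst, ih h]
  | tpre γ E ih => simp only [free] at h; simp [subst, ih h]
  | sum E F ihE ihF =>
      simp only [free] at h; push_neg at h
      simp [subst, ihE h.1, ihF h.2]
  | tcho E F ihE ihF =>
      simp only [free] at h; push_neg at h
      simp [subst, ihE h.1, ihF h.2]
  | recur y E ih =>
      by_cases hyx : y = x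
      · simp [subst, hyx]
      · simp only [free] at h; push_neg at h
        simp [subst, hyx, ih (h (Ne.symm hyx))]
  | pri E ih => simp only [free] at h; simp [subst, ih h]
  | vis E ih => simp only [free] at h; simp [subst, ih h]
  | hide L E ih => simp only [free] at h; simp [subst, ih h]
  | par S E F ihE ihF =>
      simp only [free] at h; push_neg at h
      simp [subst, ihE h.1, ihF h.2]
  | lmerge S E F ihE ihF =>
      simp only [free] at h; push_neg at h
      simp [subst, ihE h.1, ihF h.2]
  | smerge S E F ihE ihF =>
      simp only [free] at h; push_neg at h
      simp [subst, ihE h.1, ihF h.2]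

theorem free_subst {E B : Expr} {x y : ℕ} (h : free (subst E x B) y) :
    (free E y ∧ y ≠ x) ∨ (free E x ∧ free B y) := by
  induction E with
  | nil => simp [subst, free] at h
  | one => simp [subst, free] at h
  | var m =>
      by_cases hmx : m = x
      · subst hmx
        simp only [subst, if_pos rfl] at h
        exact Or.inr ⟨rfl, h⟩
      · simp only [subst, if_neg hmx, free] at h
        subst h
        exact Or.inl ⟨rfl, fun hyx => hmx hyx⟩
  | pre γ E ih => simp only [subst, free] at h ⊢; exact ih h
  | tpre γ E ih => simp only [subst, free] at h ⊢; exact ih h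
  | sum E F ihE ihF =>
      simp only [subst, free] at h ⊢
      rcases h with h | h
      · rcases ihE h with ⟨h1, h2⟩ | ⟨h1, h2⟩
        · exact Or.inl ⟨Or.inl h1, h2⟩
        · exact Or.inr ⟨Or.inl h1, h2⟩
      · rcases ihF h with ⟨h1, h2⟩ | ⟨h1, h2⟩
        · exact Or.inl ⟨Or.inr h1, h2⟩
        · exact Or.inr ⟨Or.inr h1, h2⟩
  | tcho E F ihE ihF =>
      simp only [subst, free] at h ⊢
      rcases h with h | h
      · rcases ihE h with ⟨h1, h2⟩ | ⟨h1, h2⟩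
        · exact Or.inl ⟨Or.inl h1, h2⟩
        · exact Or.inr ⟨Or.inl h1, h2⟩
      · rcases ihF h with ⟨h1, h2⟩ | ⟨h1, h2⟩
        · exact Or.inl ⟨Or.inr h1, h2⟩
        · exact Or.inr ⟨Or.inr h1, h2⟩
  | recur z E ih =>
      by_cases hzx : z = x
      · subst hzx
        simp only [subst, if_pos rfl, free] at h ⊢
        exact Or.inl ⟨⟨h.1, h.2⟩, h.1⟩
      · simp only [subst, if_neg hzx, free] at h ⊢
        rcases ih h.2 with ⟨h1, h2⟩ | ⟨h1, h2⟩
        · exact Or.inl ⟨⟨h.1, h1⟩, h2⟩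
        · exact Or.inr ⟨⟨fun hxz => hzx hxz.symm, h1⟩, h2⟩
  | pri E ih => simp only [subst, free] at h ⊢; exact ih h
  | vis E ih => simp only [subst, free] at h ⊢; exact ih h
  | hide L E ih => simp only [subst, free] at h ⊢; exact ih h
  | par S E F ihE ihF =>
      simp only [subst, free] at h ⊢
      rcases h with h | h
      · rcases ihE h with ⟨h1, h2⟩ | ⟨h1, h2⟩
        · exact Or.inl ⟨Or.inl h1, h2⟩
        · exact Or.inr ⟨Or.inl h1, h2⟩
      · rcases ihF h with ⟨h1, h2⟩ | ⟨h1, h2⟩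
        · exact Or.inl ⟨Or.inr h1, h2⟩
        · exact Or.inr ⟨Or.inr h1, h2⟩
  | lmerge S E F ihE ihF =>
      simp only [subst, free] at h ⊢
      rcases h with h | h
      · rcases ihE h with ⟨h1, h2⟩ | ⟨h1, h2⟩
        · exact Or.inl ⟨Or.inl h1, h2⟩
        · exact Or.inr ⟨Or.inl h1, h2⟩
      · rcases ihF h with ⟨h1, h2⟩ | ⟨h1, h2⟩
        · exact Or.inl ⟨Or.inr h1, h2⟩
        · exact Or.inr ⟨Or.inr h1, h2⟩
  | smerge S E F ihE ihF =>
      simp only [subst, free] at h ⊢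
      rcases h with h | h
      · rcases ihE h with ⟨h1, h2⟩ | ⟨h1, h2⟩
        · exact Or.inl ⟨Or.inl h1, h2⟩
        · exact Or.inr ⟨Or.inl h1, h2⟩
      · rcases ihF h with ⟨h1, h2⟩ | ⟨h1, h2⟩
        · exact Or.inl ⟨Or.inr h1, h2⟩
        · exact Or.inr ⟨Or.inr h1, h2⟩

theorem closed_subst {E B : Expr} {x : ℕ} (hE : ∀ y, free E y → y = x)
    (hB : Closed B) : Closed (subst E x B) := by
  intro y hy
  rcases free_subst hy with ⟨h1, h2⟩ | ⟨_, h2⟩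
  · exact h2 (hE y h1)
  · exact hB y h2

theorem notfree_GVar {B : Expr} {y : ℕ} (h : ¬ free B y) : GVar B y := by
  induction B with
  | nil => trivial
  | one => trivial
  | var m => simp only [free] at h; exact h
  | pre γ E ih => simp only [free] at h; exact fun _ => ih h
  | tpre γ E ih => simp only [free] at h; exact fun _ => ih h
  | sum E F ihE ihF =>
      simp only [free] at h; push_neg at h; exact ⟨ihE h.1, ihF h.2⟩
  | tcho E F ihE ihF =>
      simp only [free] at h; push_neg at h; exact ⟨ihE h.1, ihF h.2⟩
  | recur z E ih =>
      simp only [free] at h; push_neg at h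
      intro hzy
      exact ih (h (Ne.symm hzy))
  | pri E ih => simp only [free] at h; exact ih h
  | vis E ih => simp only [free] at h; exact ih h
  | hide L E ih => simp only [free] at h; exact ih h
  | par S E F ihE ihF =>
      simp only [free] at h; push_neg at h; exact ⟨ihE h.1, ihF h.2⟩
  | lmerge S E F ihE ihF =>
      simp only [free] at h; push_neg at h; exact ⟨ihE h.1, ihF h.2⟩
  | smerge S E F ihE ihF =>
      simp only [free] at h; push_neg at h; exact ⟨ihE h.1, ihF h.2⟩

theorem GVar_subst {A B : Expr} {x y : ℕ} (hA : GVar A y) (hB : GVar B y) :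
    GVar (subst A x B) y := by
  induction A with
  | nil => trivial
  | one => trivial
  | var m =>
      by_cases hmx : m = x
      · subst hmx; simp only [subst, if_pos rfl]; exact hB
      · simp only [subst, if_neg hmx]; exact hA
  | pre γ E ih =>
      simp only [GVar, subst] at hA ⊢; exact fun hγ => ih (hA hγ)
  | tpre γ E ih =>
      simp only [GVar, subst] at hA ⊢; exact fun hγ => ih (hA hγ)
  | sum E F ihE ihF => exact ⟨ihE hA.1, ihF hA.2⟩
  | tcho E F ihE ihF => exact ⟨ihE hA.1, ihF hA.2⟩
  | recur z E ih =>
      by_cases hzx : z = x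
      · subst hzx; simp only [subst, if_pos rfl]; exact hA
      · simp only [subst, if_neg hzx, GVar] at hA ⊢
        exact fun hzy => ih (hA hzy)
  | pri E ih => exact ih hA
  | vis E ih => exact ih hA
  | hide L E ih => exact ih hA
  | par S E F ihE ihF => exact ⟨ihE hA.1, ihF hA.2⟩
  | lmerge S E F ihE ihF => exact ⟨ihE hA.1, ihF hA.2⟩
  | smerge S E F ihE ihF => exact ⟨ihE hA.1, ihF hA.2⟩

theorem guarded_subst {A B : Expr} {x : ℕ} (hA : Guarded A) (hB : Guarded B)
    (hBc : Closed B) : Guarded (subst A x B) := by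
  induction A with
  | nil => trivial
  | one => trivial
  | var m =>
      by_cases hmx : m = x
      · subst hmx; simp only [subst, if_pos rfl]; exact hB
      · simp only [subst, if_neg hmx]; trivial
  | pre γ E ih => exact ih hA
  | tpre γ E ih => exact ih hA
  | sum E F ihE ihF => exact ⟨ihE hA.1, ihF hA.2⟩
  | tcho E F ihE ihF => exact ⟨ihE hA.1, ihF hA.2⟩
  | recur z E ih =>
      by_cases hzx : z = x
      · subst hzx; simp only [subst, if_pos rfl]; exact hA
      · simp only [subst, if_neg hzx, Guarded] at hA ⊢
        exact ⟨GVar_subst hA.1 (notfree_GVar (hBc z)), ih hA.2⟩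
  | pri E ih => exact ih hA
  | vis E ih => exact ih hA
  | hide L E ih => exact ih hA
  | par S E F ihE ihF => exact ⟨ihE hA.1, ihF hA.2⟩
  | lmerge S E F ihE ihF => exact ⟨ihE hA.1, ihF hA.2⟩
  | smerge S E F ihE ihF => exact ⟨ihE hA.1, ihF hA.2⟩

theorem basic_subst {A B : Expr} {x : ℕ} (hA : Basic A) (hB : Basic B) :
    Basic (subst A x B) := by
  induction A with
  | var m =>
      by_cases hmx : m = x
      · subst hmx; simp only [subst, if_pos rfl]; exact hB
      · simp only [subst, if_neg hmx]; trivial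
  | nil => trivial
  | pre γ E ih => exact ih hA
  | sum E F ihE ihF => exact ⟨ihE hA.1, ihF hA.2⟩
  | recur z E ih =>
      by_cases hzx : z = x
      · subst hzx; simp only [subst, if_pos rfl]; exact hA
      · simp only [subst, if_neg hzx]; exact ih hA
  | _ => exact hA.elim

theorem GVar_not_FUVar {E : Expr} {x : ℕ} (h : GVar E x) : ¬ FUVar E x := by
  induction E with
  | nil => exact fun h' => h'
  | one => exact fun h' => h'
  | var m => exact fun h' => h h'
  | pre γ E ih => exact fun h' => h'
  | tpre γ E ih => exact fun h' => h'
  | sum E F ihE ihF =>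
      rintro (h' | h')
      · exact ihE h.1 h'
      · exact ihF h.2 h'
  | tcho E F ihE ihF =>
      rintro (h' | h')
      · exact ihE h.1 h'
      · exact ihF h.2 h'
  | recur z E ih =>
      rintro ⟨hzx, h'⟩
      exact ih (h hzx) h'
  | pri E ih => exact fun h' => ih h h'
  | vis E ih => exact fun h' => ih h h'
  | hide L E ih => exact fun h' => ih h h'
  | par S E F ihE ihF =>
      rintro (h' | h')
      · exact ihE h.1 h'
      · exact ihF h.2 h'
  | lmerge S E F ihE ihF =>
      rintro (h' | h')
      · exact ihE h.1 h'
      · exact ihF h.2 h'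
  | smerge S E F ihE ihF =>
      rintro (h' | h')
      · exact ihE h.1 h'
      · exact ihF h.2 h'

/-- Unguarded size: measures the sum/recur skeleton above prefixes. -/
def ug : Expr → ℕ
  | .sum E F => 1 + ug E + ug F
  | .recur _ E => 1 + ug E
  | _ => 0

/-- τ-norm : counts τ-prefixes at τ-unguarded positions. -/
def td : Expr → ℕ
  | .pre γ E => if γ = Act.tau then 1 + td E else 0
  | .sum E F => td E + td F
  | .recur _ E => td E
  | _ => 0

theorem ug_subst {E B : Expr} {x : ℕ} (h : ¬ FUVar E x) :
    ug (subst E x B) = ug E := by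
  induction E with
  | var m =>
      have : m ≠ x := fun hmx => h hmx
      simp [subst, this, ug]
  | sum E F ihE ihF =>
      simp only [FUVar] at h; push_neg at h
      simp [subst, ug, ihE h.1, ihF h.2]
  | recur z E ih =>
      by_cases hzx : z = x
      · simp [subst, hzx]
      · simp only [FUVar] at h; push_neg at h
        simp [subst, hzx, ug, ih (h hzx)]
  | nil => rfl
  | one => rfl
  | pre γ E ih => simp [subst, ug]
  | tpre γ E ih => simp [subst, ug]
  | tcho E F ihE ihF => simp [subst, ug]
  | pri E ih => simp [subst, ug]
  | vis E ih => simp [subst, ug]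
  | hide L E ih => simp [subst, ug]
  | par S E F ihE ihF => simp [subst, ug]
  | lmerge S E F ihE ihF => simp [subst, ug]
  | smerge S E F ihE ihF => simp [subst, ug]

theorem td_subst {E B : Expr} {x : ℕ} (h : GVar E x) :
    td (subst E x B) = td E := by
  induction E with
  | var m =>
      have : m ≠ x := h
      simp [subst, this]
  | pre γ E ih =>
      by_cases hγ : γ = Act.tau
      · subst hγ
        simp [subst, td, ih (h rfl)]
      · simp [subst, td, hγ]
  | sum E F ihE ihF =>
      simp [subst, td, ihE h.1, ihF h.2]
  | recur z E ih =>
      by_cases hzx : z = x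
      · simp [subst, hzx]
      · simp only [GVar] at h
        simp [subst, hzx, td, ih (h hzx)]
  | nil => rfl
  | one => rfl
  | tpre γ E ih => simp [subst, td]
  | tcho E F ihE ihF => simp [subst, td]
  | pri E ih => simp [subst, td]
  | vis E ih => simp [subst, td]
  | hide L E ih => simp [subst, td]
  | par S E F ihE ihF => simp [subst, td]
  | lmerge S E F ihE ihF => simp [subst, td]
  | smerge S E F ihE ihF => simp [subst, td]

/-! ### msubst lemmas -/

theorem msubst_id (E : Expr) : msubst E (fun y => .var y) = E := by
  induction E with
  | nil => rfl
  | one => rfl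
  | var m => rfl
  | pre γ E ih => simp [msubst, ih]
  | tpre γ E ih => simp [msubst, ih]
  | sum E F ihE ihF => simp [msubst, ihE, ihF]
  | tcho E F ihE ihF => simp [msubst, ihE, ihF]
  | recur z E ih =>
      have : Function.update (fun y => Expr.var y) z (Expr.var z) = fun y => Expr.var y := by
        funext y
        by_cases hyz : y = z
        · subst hyz; simp
        · simp [Function.update, hyz]
      simp [msubst, this, ih]
  | pri E ih => simp [msubst, ih]
  | vis E ih => simp [msubst, ih]
  | hide L E ih => simp [msubst, ih]
  | par S E F ihE ihF => simp [msubst, ihE, ihF]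
  | lmerge S E F ihE ihF => simp [msubst, ihE, ihF]
  | smerge S E F ihE ihF => simp [msubst, ihE, ihF]

theorem free_msubst {E : Expr} {σ : ℕ → Expr} {z : ℕ}
    (h : free (msubst E σ) z) : ∃ y, free E y ∧ free (σ y) z := by
  induction E generalizing σ with
  | nil => exact absurd h id
  | one => exact absurd h id
  | var m => exact ⟨m, rfl, h⟩
  | pre γ E ih =>
      obtain ⟨y, h1, h2⟩ := ih h
      exact ⟨y, h1, h2⟩
  | tpre γ E ih =>
      obtain ⟨y, h1, h2⟩ := ih h
      exact ⟨y, h1, h2⟩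
  | sum E F ihE ihF =>
      rcases h with h | h
      · obtain ⟨y, h1, h2⟩ := ihE h; exact ⟨y, Or.inl h1, h2⟩
      · obtain ⟨y, h1, h2⟩ := ihF h; exact ⟨y, Or.inr h1, h2⟩
  | tcho E F ihE ihF =>
      rcases h with h | h
      · obtain ⟨y, h1, h2⟩ := ihE h; exact ⟨y, Or.inl h1, h2⟩
      · obtain ⟨y, h1, h2⟩ := ihF h; exact ⟨y, Or.inr h1, h2⟩
  | recur x E ih =>
      obtain ⟨hzx, h⟩ := h
      obtain ⟨y, h1, h2⟩ := ih h
      by_cases hyx : y = x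
      · subst hyx
        rw [Function.update_self] at h2
        exact absurd (show y = z from h2) (fun hh => hzx hh.symm)
      · rw [Function.update_of_ne hyx] at h2
        exact ⟨y, ⟨hyx, h1⟩, h2⟩
  | pri E ih =>
      obtain ⟨y, h1, h2⟩ := ih h; exact ⟨y, h1, h2⟩
  | vis E ih =>
      obtain ⟨y, h1, h2⟩ := ih h; exact ⟨y, h1, h2⟩
  | hide L E ih =>
      obtain ⟨y, h1, h2⟩ := ih h; exact ⟨y, h1, h2⟩
  | par S E F ihE ihF =>
      rcases h with h | h
      · obtain ⟨y, h1, h2⟩ := ihE h; exact ⟨y, Or.inl h1, h2⟩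
      · obtain ⟨y, h1, h2⟩ := ihF h; exact ⟨y, Or.inr h1, h2⟩
  | lmerge S E F ihE ihF =>
      rcases h with h | h
      · obtain ⟨y, h1, h2⟩ := ihE h; exact ⟨y, Or.inl h1, h2⟩
      · obtain ⟨y, h1, h2⟩ := ihF h; exact ⟨y, Or.inr h1, h2⟩
  | smerge S E F ihE ihF =>
      rcases h with h | h
      · obtain ⟨y, h1, h2⟩ := ihE h; exact ⟨y, Or.inl h1, h2⟩
      · obtain ⟨y, h1, h2⟩ := ihF h; exact ⟨y, Or.inr h1, h2⟩

theorem msubst_closed {E : Expr} {σ : ℕ → Expr}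
    (h : ∀ y, free E y → Closed (σ y)) : Closed (msubst E σ) := by
  intro z hz
  obtain ⟨y, h1, h2⟩ := free_msubst hz
  exact h y h1 z h2

/-- The key substitution/msubst commutation. -/
theorem subst_msubst (A : Expr) (x : ℕ) (C : Expr) (σ : ℕ → Expr)
    (hσ : ∀ y, σ y = .var y ∨ ¬ free (σ y) x) :
    subst (msubst A (Function.update σ x (.var x))) x C
      = msubst A (Function.update σ x C) := by
  induction A generalizing σ with
  | nil => rfl
  | one => rfl
  | var m =>
      by_cases hmx : m = x
      · subst hmx
        simp [msubst, subst]
      · simp only [msubst, Function.update_of_ne hmx]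
        rcases hσ m with h | h
        · rw [h]; simp [subst, hmx]
        · exact subst_of_not_free C h
  | pre γ E ih => simp [msubst, subst, ih σ hσ]
  | tpre γ E ih => simp [msubst, subst, ih σ hσ]
  | sum E F ihE ihF => simp [msubst, subst, ihE σ hσ, ihF σ hσ]
  | tcho E F ihE ihF => simp [msubst, subst, ihE σ hσ, ihF σ hσ]
  | recur z E ih =>
      by_cases hzx : z = x
      · subst hzx
        simp only [msubst, Function.update_idem, subst, if_pos rfl]
        simp
      · simp only [msubst, subst, if_neg hzx]
        congr 1
        have h1 : Function.update (Function.update σ x (Expr.var x)) z (Expr.var z)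
            = Function.update (Function.update σ z (Expr.var z)) x (Expr.var x) :=
          Function.update_comm (fun h => hzx h.symm) _ _ _
        have h2 : Function.update (Function.update σ x C) z (Expr.var z)
            = Function.update (Function.update σ z (Expr.var z)) x C :=
          Function.update_comm (fun h => hzx h.symm) _ _ _
        rw [h1, h2]
        refine ih _ ?_
        intro y
        by_cases hyz : y = z
        · subst hyz
          left; simp
        · rw [Function.update_of_ne hyz]
          exact hσ y
  | pri E ih => simp [msubst, subst, ih σ hσ]
  | vis E ih => simp [msubst, subst, ih σ hσ]
  | hide L E ih => simp [msubst, subst, ih σ hσ]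
  | par S E F ihE ihF => simp [msubst, subst, ihE σ hσ, ihF σ hσ]
  | lmerge S E F ihE ihF => simp [msubst, subst, ihE σ hσ, ihF σ hσ]
  | smerge S E F ihE ihF => simp [msubst, subst, ihE σ hσ, ihF σ hσ]

/-! ### Syntactic derivatives and finiteness skeleton -/

/-- Syntactic one-step derivative relation (for basic terms). -/
inductive SubDer : Expr → Expr → Prop where
  | pre (γ : Act) (E : Expr) : SubDer (.pre γ E) E
  | sumL {E X : Expr} (F : Expr) : SubDer E X → SubDer (.sum E F) X
  | sumR {F X : Expr} (E : Expr) : SubDer F X → SubDer (.sum E F) X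
  | unf (x : ℕ) (E : Expr) : SubDer (.recur x E) (subst E x (.recur x E))

/-- Finite syntactic-derivative over-approximation, with closed environment. -/
def D : Expr → (ℕ → Expr) → List Expr
  | .nil, _ => [.nil]
  | .one, _ => [.one]
  | .var m, σ => [σ m]
  | .pre γ E, σ => msubst (.pre γ E) σ :: D E σ
  | .sum E F, σ => msubst (.sum E F) σ :: (D E σ ++ D F σ)
  | .recur x E, σ =>
      msubst (.recur x E) σ :: D E (Function.update σ x (msubst (.recur x E) σ))
  | E, σ => [msubst E σ]

theorem msubst_mem_D (E : Expr) (σ : ℕ → Expr) : msubst E σ ∈ D E σ := by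
  cases E <;> simp [D, msubst]

theorem D_closure : ∀ (E : Expr) (σ : ℕ → Expr),
    (∀ y, σ y = .var y ∨ Closed (σ y)) →
    (∀ y, free E y → Closed (σ y)) →
    ∀ Q ∈ D E σ, ∀ Q', SubDer Q Q' →
      Q' ∈ D E σ ∨ ∃ y, free E y ∧ SubDer (σ y) Q' := by
  intro E
  induction E with
  | nil =>
      intro σ _ _ Q hQ Q' hstep
      simp only [D, List.mem_singleton] at hQ
      subst hQ; cases hstep
  | one =>
      intro σ _ _ Q hQ Q' hstep
      simp only [D, List.mem_singleton] at hQ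
      subst hQ; cases hstep
  | var m =>
      intro σ _ _ Q hQ Q' hstep
      simp only [D, List.mem_singleton] at hQ
      subst hQ
      exact Or.inr ⟨m, rfl, hstep⟩
  | pre γ E ih =>
      intro σ hσ hf Q hQ Q' hstep
      simp only [D, List.mem_cons] at hQ
      rcases hQ with hQ | hQ
      · subst hQ
        simp only [msubst] at hstep
        cases hstep with
        | pre => exact Or.inl (List.mem_cons_of_mem _ (msubst_mem_D E σ))
      · rcases ih σ hσ (fun y hy => hf y hy) Q hQ Q' hstep with h | ⟨y, h1, h2⟩
        · exact Or.inl (List.mem_cons_of_mem _ h)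
        · exact Or.inr ⟨y, h1, h2⟩
  | sum E F ihE ihF =>
      intro σ hσ hf Q hQ Q' hstep
      simp only [D, List.mem_cons, List.mem_append] at hQ
      rcases hQ with hQ | hQ | hQ
      · subst hQ
        simp only [msubst] at hstep
        cases hstep with
        | sumL _ h =>
            rcases ihE σ hσ (fun y hy => hf y (Or.inl hy)) _ (msubst_mem_D E σ) Q' h with
              h' | ⟨y, h1, h2⟩
            · exact Or.inl (List.mem_cons_of_mem _ (List.mem_append.mpr (Or.inl h')))
            · exact Or.inr ⟨y, Or.inl h1, h2⟩
        | sumR _ h =>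
            rcases ihF σ hσ (fun y hy => hf y (Or.inr hy)) _ (msubst_mem_D F σ) Q' h with
              h' | ⟨y, h1, h2⟩
            · exact Or.inl (List.mem_cons_of_mem _ (List.mem_append.mpr (Or.inr h')))
            · exact Or.inr ⟨y, Or.inr h1, h2⟩
      · rcases ihE σ hσ (fun y hy => hf y (Or.inl hy)) Q hQ Q' hstep with h | ⟨y, h1, h2⟩
        · exact Or.inl (List.mem_cons_of_mem _ (List.mem_append.mpr (Or.inl h)))
        · exact Or.inr ⟨y, Or.inl h1, h2⟩
      · rcases ihF σ hσ (fun y hy => hf y (Or.inr hy)) Q hQ Q' hstep with h | ⟨y, h1, h2⟩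
        · exact Or.inl (List.mem_cons_of_mem _ (List.mem_append.mpr (Or.inr h)))
        · exact Or.inr ⟨y, Or.inr h1, h2⟩
  | recur x E ih =>
      intro σ hσ hf Q hQ Q' hstep
      set μ := msubst (.recur x E) σ with hμdef
      have hμc : Closed μ := msubst_closed (fun y hy => hf y hy)
      have hσ' : ∀ y, Function.update σ x μ y = .var y ∨ Closed (Function.update σ x μ y) := by
        intro y
        by_cases hyx : y = x
        · subst hyx; rw [Function.update_self]; exact Or.inr hμc
        · rw [Function.update_of_ne hyx]; exact hσ y
      have hf' : ∀ y, free E y → Closed (Function.update σ x μ y) := by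
        intro y hy
        by_cases hyx : y = x
        · subst hyx; rw [Function.update_self]; exact hμc
        · rw [Function.update_of_ne hyx]; exact hf y ⟨hyx, hy⟩
      have hunf : ∀ Q', SubDer μ Q' → Q' ∈ D E (Function.update σ x μ) := by
        intro Q' h
        have : μ = .recur x (msubst E (Function.update σ x (.var x))) := by
          simp [hμdef, msubst]
        rw [this] at h
        cases h with
        | unf =>
            have hcomm := subst_msubst E x μ σ (by
              intro y
              rcases hσ y with h | h
              · exact Or.inl h
              · exact Or.inr (h x))
            rw [← this, hcomm]
            exact msubst_mem_D E _
      simp only [D, List.mem_cons] at hQ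
      rcases hQ with hQ | hQ
      · subst hQ
        exact Or.inl (List.mem_cons_of_mem _ (hunf Q' hstep))
      · rcases ih _ hσ' hf' Q hQ Q' hstep with h | ⟨y, h1, h2⟩
        · exact Or.inl (List.mem_cons_of_mem _ h)
        · by_cases hyx : y = x
          · subst hyx
            rw [Function.update_self] at h2
            exact Or.inl (List.mem_cons_of_mem _ (hunf Q' h2))
          · rw [Function.update_of_ne hyx] at h2
            exact Or.inr ⟨y, ⟨hyx, h1⟩, h2⟩
  | tpre γ E ih =>
      intro σ _ _ Q hQ Q' hstep
      simp only [D, List.mem_singleton] at hQ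
      subst hQ; simp only [msubst] at hstep; cases hstep
  | tcho E F ihE ihF =>
      intro σ _ _ Q hQ Q' hstep
      simp only [D, List.mem_singleton] at hQ
      subst hQ; simp only [msubst] at hstep; cases hstep
  | pri E ih =>
      intro σ _ _ Q hQ Q' hstep
      simp only [D, List.mem_singleton] at hQ
      subst hQ; simp only [msubst] at hstep; cases hstep
  | vis E ih =>
      intro σ _ _ Q hQ Q' hstep
      simp only [D, List.mem_singleton] at hQ
      subst hQ; simp only [msubst] at hstep; cases hstep
  | hide L E ih =>
      intro σ _ _ Q hQ Q' hstep
      simp only [D, List.mem_singleton] at hQ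
      subst hQ; simp only [msubst] at hstep; cases hstep
  | par S E F ihE ihF =>
      intro σ _ _ Q hQ Q' hstep
      simp only [D, List.mem_singleton] at hQ
      subst hQ; simp only [msubst] at hstep; cases hstep
  | lmerge S E F ihE ihF =>
      intro σ _ _ Q hQ Q' hstep
      simp only [D, List.mem_singleton] at hQ
      subst hQ; simp only [msubst] at hstep; cases hstep
  | smerge S E F ihE ihF =>
      intro σ _ _ Q hQ Q' hstep
      simp only [D, List.mem_singleton] at hQ
      subst hQ; simp only [msubst] at hstep; cases hstep

/-! ### Preservation and translation to syntactic derivatives -/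

theorem stepstd_ne_delta {Q γ Q'} (h : StepStd Q γ Q') : γ ≠ Act.delta := by
  induction h <;> first | assumption | simp

theorem stepstd_pres {Q γ Q'} (h : StepStd Q γ Q') :
    Basic Q → Closed Q → Guarded Q → Basic Q' ∧ Closed Q' ∧ Guarded Q' := by
  induction h with
  | pre h E => exact fun hB hC hG => ⟨hB, fun y hy => hC y hy, hG⟩
  | sumL F h ih =>
      exact fun hB hC hG => ih hB.1 (fun y hy => hC y (Or.inl hy)) hG.1
  | sumR E h ih =>
      exact fun hB hC hG => ih hB.2 (fun y hy => hC y (Or.inr hy)) hG.2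
  | @unf x E γ P' h ih =>
      intro hB hC hG
      have hBs : Basic (subst E x (.recur x E)) := basic_subst hB hB
      have hCs : Closed (subst E x (.recur x E)) :=
        closed_subst (fun y hy => by
          by_contra hyx
          exact hC y ⟨hyx, hy⟩) hC
      have hGs : Guarded (subst E x (.recur x E)) := guarded_subst hG.2 hG hC
      exact ih hBs hCs hGs
  | tpre h E => exact fun hB => hB.elim
  | tchoL Q h ih => exact fun hB => hB.elim
  | tchoR P h ih => exact fun hB => hB.elim
  | pri h ih => exact fun hB => hB.elim
  | parL Q h₁ h₂ ih => exact fun hB => hB.elim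
  | parR P h₁ h₂ ih => exact fun hB => hB.elim
  | parS h h₁ h₂ ih₁ ih₂ => exact fun hB => hB.elim
  | hideIn h h' ih => exact fun hB => hB.elim
  | hideOut h h' ih => exact fun hB => hB.elim
  | visA h ih => exact fun hB => hB.elim
  | visT h₁ h₂ ih₁ ih₂ => exact fun hB => hB.elim
  | lm Q h h' ih => exact fun hB => hB.elim
  | sm h h₁ h₂ ih₁ ih₂ => exact fun hB => hB.elim

theorem stepdel_pres {Q Q'} (h : StepDel Q Q') :
    Basic Q → Closed Q → Guarded Q → Basic Q' ∧ Closed Q' ∧ Guarded Q' := by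
  induction h with
  | one => exact fun hB => hB.elim
  | pre E => exact fun hB hC hG => ⟨hB, fun y hy => hC y hy, hG⟩
  | tpreD E => exact fun hB => hB.elim
  | tpreV a E => exact fun hB => hB.elim
  | sumL Q h hnt ih =>
      exact fun hB hC hG => ih hB.1 (fun y hy => hC y (Or.inl hy)) hG.1
  | sumR P h hnt ih =>
      exact fun hB hC hG => ih hB.2 (fun y hy => hC y (Or.inr hy)) hG.2
  | tcho h₁ h₂ ih₁ ih₂ => exact fun hB => hB.elim
  | par h₁ h₂ ih₁ ih₂ => exact fun hB => hB.elim
  | hide h h' ih => exact fun hB => hB.elim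
  | @unf x E P' h ih =>
      intro hB hC hG
      have hBs : Basic (subst E x (.recur x E)) := basic_subst hB hB
      have hCs : Closed (subst E x (.recur x E)) :=
        closed_subst (fun y hy => by
          by_contra hyx
          exact hC y ⟨hyx, hy⟩) hC
      have hGs : Guarded (subst E x (.recur x E)) := guarded_subst hG.2 hG hC
      exact ih hBs hCs hGs
  | sm h₁ h₂ ih₁ ih₂ => exact fun hB => hB.elim

theorem step_pres {Q γ Q'} (h : Step Q γ Q') :
    Basic Q → Closed Q → Guarded Q → Basic Q' ∧ Closed Q' ∧ Guarded Q' := by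
  unfold Step at h
  by_cases hγ : γ = Act.delta
  · rw [if_pos hγ] at h; exact stepdel_pres h
  · rw [if_neg hγ] at h; exact stepstd_pres h

theorem reach_CGB {P Q} (h : Reach P Q) :
    Basic P → Closed P → Guarded P → Basic Q ∧ Closed Q ∧ Guarded Q := by
  induction h with
  | refl => exact fun hB hC hG => ⟨hB, hC, hG⟩
  | tail _ hstep ih =>
      intro hB hC hG
      obtain ⟨γ, hγ⟩ := hstep
      obtain ⟨h1, h2, h3⟩ := ih hB hC hG
      exact step_pres hγ h1 h2 h3

theorem transgen_sumL {E F X : Expr} (h : Relation.TransGen SubDer E X) :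
    Relation.TransGen SubDer (.sum E F) X := by
  induction h with
  | single h => exact Relation.TransGen.single (SubDer.sumL _ h)
  | tail h1 h2 ih => exact ih.tail h2

theorem transgen_sumR {E F X : Expr} (h : Relation.TransGen SubDer F X) :
    Relation.TransGen SubDer (.sum E F) X := by
  induction h with
  | single h => exact Relation.TransGen.single (SubDer.sumR _ h)
  | tail h1 h2 ih => exact ih.tail h2

theorem stepstd_subder {Q γ Q'} (h : StepStd Q γ Q') (hB : Basic Q) :
    Relation.TransGen SubDer Q Q' := by
  induction h with
  | pre h E => exact Relation.TransGen.single (SubDer.pre _ _)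
  | sumL F h ih => exact transgen_sumL (ih hB.1)
  | sumR E h ih => exact transgen_sumR (ih hB.2)
  | @unf x E γ P' h ih =>
      exact Relation.TransGen.head (SubDer.unf x E) (ih (basic_subst hB hB))
  | tpre h E => exact hB.elim
  | tchoL Q h ih => exact hB.elim
  | tchoR P h ih => exact hB.elim
  | pri h ih => exact hB.elim
  | parL Q h₁ h₂ ih => exact hB.elim
  | parR P h₁ h₂ ih => exact hB.elim
  | parS h h₁ h₂ ih₁ ih₂ => exact hB.elim
  | hideIn h h' ih => exact hB.elim
  | hideOut h h' ih => exact hB.elim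
  | visA h ih => exact hB.elim
  | visT h₁ h₂ ih₁ ih₂ => exact hB.elim
  | lm Q h h' ih => exact hB.elim
  | sm h h₁ h₂ ih₁ ih₂ => exact hB.elim

theorem stepdel_subder {Q Q'} (h : StepDel Q Q') (hB : Basic Q) :
    Relation.TransGen SubDer Q Q' := by
  induction h with
  | one => exact hB.elim
  | pre E => exact Relation.TransGen.single (SubDer.pre _ _)
  | tpreD E => exact hB.elim
  | tpreV a E => exact hB.elim
  | sumL Q h hnt ih => exact transgen_sumL (ih hB.1)
  | sumR P h hnt ih => exact transgen_sumR (ih hB.2)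
  | tcho h₁ h₂ ih₁ ih₂ => exact hB.elim
  | par h₁ h₂ ih₁ ih₂ => exact hB.elim
  | hide h h' ih => exact hB.elim
  | @unf x E P' h ih =>
      exact Relation.TransGen.head (SubDer.unf x E) (ih (basic_subst hB hB))
  | sm h₁ h₂ ih₁ ih₂ => exact hB.elim

theorem step_subder {Q γ Q'} (h : Step Q γ Q') (hB : Basic Q) :
    Relation.TransGen SubDer Q Q' := by
  unfold Step at h
  by_cases hγ : γ = Act.delta
  · rw [if_pos hγ] at h; exact stepdel_subder h hB
  · rw [if_neg hγ] at h; exact stepstd_subder h hB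

/-- Maximal progress: a process that can do τ has no δ transition. -/
theorem no_del_of_tau {Q Q'} (h : StepDel Q Q') : ¬ CanTau Q := by
  induction h with
  | one => rintro ⟨R, h⟩; cases h
  | pre E => rintro ⟨R, h⟩; cases h
  | tpreD E => rintro ⟨R, h⟩; cases h
  | tpreV a E => rintro ⟨R, h⟩; cases h
  | sumL Q h hnt ih =>
      rintro ⟨R, hR⟩
      cases hR with
      | sumL _ h' => exact ih ⟨R, h'⟩
      | sumR _ h' => exact hnt ⟨R, h'⟩
  | sumR P h hnt ih =>
      rintro ⟨R, hR⟩
      cases hR with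
      | sumL _ h' => exact hnt ⟨R, h'⟩
      | sumR _ h' => exact ih ⟨R, h'⟩
  | tcho h₁ h₂ ih₁ ih₂ =>
      rintro ⟨R, hR⟩
      cases hR with
      | tchoL _ h' => exact ih₁ ⟨R, h'⟩
      | tchoR _ h' => exact ih₂ ⟨R, h'⟩
  | par h₁ h₂ ih₁ ih₂ =>
      rintro ⟨R, hR⟩
      cases hR with
      | parL _ _ h' => exact ih₁ ⟨_, h'⟩
      | parR _ _ h' => exact ih₂ ⟨_, h'⟩
  | hide hvis h ih =>
      rintro ⟨R, hR⟩
      cases hR with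
      | hideIn hmem h' => exact hvis _ hmem ⟨_, h'⟩
      | hideOut _ h' => exact ih ⟨_, h'⟩
  | unf h ih =>
      rintro ⟨R, hR⟩
      cases hR with
      | unf h' => exact ih ⟨R, h'⟩
  | sm h₁ h₂ ih₁ ih₂ => rintro ⟨R, hR⟩; cases hR

theorem td_step_aux {Q α Q'} (h : StepStd Q α Q') (hα : α = Act.tau) :
    Basic Q → Closed Q → Guarded Q → td Q' < td Q := by
  induction h with
  | pre h E =>
      subst hα
      intro _ _ _
      simp [td]
  | sumL F h ih =>
      intro hB hC hG
      have := ih hα hB.1 (fun y hy => hC y (Or.inl hy)) hG.1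
      simp only [td]
      omega
  | sumR E h ih =>
      intro hB hC hG
      have := ih hα hB.2 (fun y hy => hC y (Or.inr hy)) hG.2
      simp only [td]
      omega
  | @unf x E γ P' h ih =>
      intro hB hC hG
      have hBs : Basic (subst E x (.recur x E)) := basic_subst hB hB
      have hCs : Closed (subst E x (.recur x E)) :=
        closed_subst (fun y hy => by
          by_contra hyx
          exact hC y ⟨hyx, hy⟩) hC
      have hGs : Guarded (subst E x (.recur x E)) := guarded_subst hG.2 hG hC
      have := ih hα hBs hCs hGs
      rw [td_subst hG.1] at this
      simpa [td] using this
  | tpre h E => exact fun hB => hB.elim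
  | tchoL Q h ih => exact fun hB => hB.elim
  | tchoR P h ih => exact fun hB => hB.elim
  | pri h ih => exact fun hB => hB.elim
  | parL Q h₁ h₂ ih => exact fun hB => hB.elim
  | parR P h₁ h₂ ih => exact fun hB => hB.elim
  | parS h h₁ h₂ ih₁ ih₂ => exact fun hB => hB.elim
  | hideIn h h' ih => exact fun hB => hB.elim
  | hideOut h h' ih => exact fun hB => hB.elim
  | visA h ih => exact fun hB => hB.elim
  | visT h₁ h₂ ih₁ ih₂ => exact fun hB => hB.elim
  | lm Q h h' ih => exact fun hB => hB.elim
  | sm h h₁ h₂ ih₁ ih₂ => exact fun hB => hB.elim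

theorem td_step {Q Q'} (h : StepStd Q Act.tau Q')
    (hB : Basic Q) (hC : Closed Q) (hG : Guarded Q) : td Q' < td Q :=
  td_step_aux h rfl hB hC hG

/-! ### The transition menu of a guarded closed basic process -/

def hasTau (m : List (Act × Expr)) : Prop := ∃ p ∈ m, p.1 = Act.tau

open Classical in
noncomputable def menu : Expr → List (Act × Expr)
  | .pre γ E => [(γ, E)]
  | .sum E F =>
      (menu E).filter (fun p => decide (p.1 ≠ Act.delta)) ++
      ((menu F).filter (fun p => decide (p.1 ≠ Act.delta)) ++
      ((if hasTau (menu F) then [] else (menu E).filter (fun p => decide (p.1 = Act.delta))) ++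
      (if hasTau (menu E) then [] else (menu F).filter (fun p => decide (p.1 = Act.delta)))))
  | .recur x E =>
      if h : ug (subst E x (.recur x E)) < 1 + ug E then menu (subst E x (.recur x E)) else []
  | _ => []
termination_by E => ug E
decreasing_by
  all_goals simp [ug]
  all_goals omega

theorem menu_pre (γ : Act) (E : Expr) : menu (.pre γ E) = [(γ, E)] := by
  rw [menu]

theorem menu_sum (E F : Expr) : menu (.sum E F) =
      (menu E).filter (fun p => decide (p.1 ≠ Act.delta)) ++
      ((menu F).filter (fun p => decide (p.1 ≠ Act.delta)) ++
      ((if hasTau (menu F) then [] else (menu E).filter (fun p => decide (p.1 = Act.delta))) ++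
      (if hasTau (menu E) then [] else (menu F).filter (fun p => decide (p.1 = Act.delta))))) := by
  rw [menu]

theorem menu_recur {x : ℕ} {E : Expr} (hG : GVar E x) :
    menu (.recur x E) = menu (subst E x (.recur x E)) := by
  have hlt : ug (subst E x (.recur x E)) < 1 + ug E := by
    rw [ug_subst (GVar_not_FUVar hG)]
    omega
  rw [menu]
  exact dif_pos hlt

theorem menu_nil : menu .nil = [] := by rw [menu.eq_def]
theorem menu_var (m : ℕ) : menu (.var m) = [] := by rw [menu.eq_def]

theorem menu_correct : ∀ N E, ug E < N → Basic E → Closed E → Guarded E →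
    (∀ α Q', StepStd E α Q' ↔ ((α, Q') ∈ menu E ∧ α ≠ Act.delta)) ∧
    (∀ Q', StepDel E Q' ↔ (Act.delta, Q') ∈ menu E) := by
  intro N
  induction N with
  | zero => omega
  | succ N ih =>
      intro E hug hB hC hG
      cases E with
      | nil =>
          constructor
          · intro α Q'
            constructor
            · intro h; cases h
            · rw [menu_nil]; rintro ⟨h, -⟩; cases h
          · intro Q'
            constructor
            · intro h; cases h
            · rw [menu_nil]; intro h; cases h
      | var m =>
          constructor
          · intro α Q'
            constructor
            · intro h; cases h
            · rw [menu_var]; rintro ⟨h, -⟩; cases h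
          · intro Q'
            constructor
            · intro h; cases h
            · rw [menu_var]; intro h; cases h
      | pre γ E =>
          constructor
          · intro α Q'
            rw [menu_pre]
            constructor
            · intro h
              cases h with
              | pre h => exact ⟨List.mem_singleton.mpr rfl, h⟩
            · rintro ⟨h, hne⟩
              rw [List.mem_singleton, Prod.mk.injEq] at h
              obtain ⟨rfl, rfl⟩ := h
              exact StepStd.pre hne _
          · intro Q'
            rw [menu_pre]
            constructor
            · intro h
              cases h with
              | pre => exact List.mem_singleton.mpr rfl
            · intro h
              rw [List.mem_singleton, Prod.mk.injEq] at h
              obtain ⟨h1, rfl⟩ := h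
              rw [← h1]
              exact StepDel.pre Q'
      | sum A B =>
          have hugA : ug A < N := by simp only [ug] at hug; omega
          have hugB : ug B < N := by simp only [ug] at hug; omega
          have ihA := ih A hugA hB.1 (fun y hy => hC y (Or.inl hy)) hG.1
          have ihB := ih B hugB hB.2 (fun y hy => hC y (Or.inr hy)) hG.2
          have hCTA : CanTau A ↔ hasTau (menu A) := by
            constructor
            · rintro ⟨R, hR⟩
              exact ⟨(Act.tau, R), ((ihA.1 _ _).mp hR).1, rfl⟩
            · rintro ⟨⟨α, R⟩, hmem, hτ⟩
              cases hτ
              exact ⟨R, (ihA.1 _ _).mpr ⟨hmem, by simp⟩⟩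
          have hCTB : CanTau B ↔ hasTau (menu B) := by
            constructor
            · rintro ⟨R, hR⟩
              exact ⟨(Act.tau, R), ((ihB.1 _ _).mp hR).1, rfl⟩
            · rintro ⟨⟨α, R⟩, hmem, hτ⟩
              cases hτ
              exact ⟨R, (ihB.1 _ _).mpr ⟨hmem, by simp⟩⟩
          constructor
          · intro α Q'
            rw [menu_sum]
            simp only [List.mem_append, List.mem_filter, decide_eq_true_eq]
            constructor
            · intro h
              have hne := stepstd_ne_delta h
              cases h with
              | sumL _ h' =>
                  exact ⟨Or.inl ⟨((ihA.1 _ _).mp h').1, hne⟩, hne⟩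
              | sumR _ h' =>
                  exact ⟨Or.inr (Or.inl ⟨((ihB.1 _ _).mp h').1, hne⟩), hne⟩
            · rintro ⟨h, hne⟩
              rcases h with ⟨h, -⟩ | ⟨h, -⟩ | h | h
              · exact StepStd.sumL _ ((ihA.1 _ _).mpr ⟨h, hne⟩)
              · exact StepStd.sumR _ ((ihB.1 _ _).mpr ⟨h, hne⟩)
              · by_cases hc : hasTau (menu B)
                · rw [if_pos hc] at h; cases h
                · rw [if_neg hc] at h
                  rw [List.mem_filter, decide_eq_true_eq] at h
                  exact absurd h.2 hne
              · by_cases hc : hasTau (menu A)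
                · rw [if_pos hc] at h; cases h
                · rw [if_neg hc] at h
                  rw [List.mem_filter, decide_eq_true_eq] at h
                  exact absurd h.2 hne
          · intro Q'
            rw [menu_sum]
            simp only [List.mem_append, List.mem_filter, decide_eq_true_eq]
            constructor
            · intro h
              cases h with
              | sumL _ h' hnt =>
                  have hm := (ihA.2 _).mp h'
                  have hc : ¬ hasTau (menu B) := fun hc => hnt (hCTB.mpr hc)
                  rw [if_neg hc]
                  exact Or.inr (Or.inr (Or.inl (List.mem_filter.mpr ⟨hm, by simp⟩)))
              | sumR _ h' hnt =>
                  have hm := (ihB.2 _).mp h'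
                  have hc : ¬ hasTau (menu A) := fun hc => hnt (hCTA.mpr hc)
                  rw [if_neg hc]
                  exact Or.inr (Or.inr (Or.inr (List.mem_filter.mpr ⟨hm, by simp⟩)))
            · rintro (⟨-, h⟩ | ⟨-, h⟩ | h | h)
              · exact absurd rfl h
              · exact absurd rfl h
              · by_cases hc : hasTau (menu B)
                · rw [if_pos hc] at h; cases h
                · rw [if_neg hc] at h
                  rw [List.mem_filter, decide_eq_true_eq] at h
                  exact StepDel.sumL _ ((ihA.2 _).mpr h.1) (fun hct => hc (hCTB.mp hct))
              · by_cases hc : hasTau (menu A)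
                · rw [if_pos hc] at h; cases h
                · rw [if_neg hc] at h
                  rw [List.mem_filter, decide_eq_true_eq] at h
                  exact StepDel.sumR _ ((ihB.2 _).mpr h.1) (fun hct => hc (hCTA.mp hct))
      | recur x A =>
          have hBs : Basic (subst A x (.recur x A)) := basic_subst hB hB
          have hCs : Closed (subst A x (.recur x A)) :=
            closed_subst (fun y hy => by
              by_contra hyx
              exact hC y ⟨hyx, hy⟩) hC
          have hGs : Guarded (subst A x (.recur x A)) := guarded_subst hG.2 hG hC
          have hugs : ug (subst A x (.recur x A)) < N := by
            rw [ug_subst (GVar_not_FUVar hG.1)]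
            simp only [ug] at hug
            omega
          have ihs := ih _ hugs hBs hCs hGs
          rw [menu_recur hG.1]
          constructor
          · intro α Q'
            constructor
            · intro h
              cases h with
              | unf h' => exact (ihs.1 _ _).mp h'
            · intro h
              exact StepStd.unf ((ihs.1 _ _).mpr h)
          · intro Q'
            constructor
            · intro h
              cases h with
              | unf h' => exact (ihs.2 _).mp h'
            · intro h
              exact StepDel.unf ((ihs.2 _).mpr h)
      | one => exact hB.elim
      | tpre γ E => exact hB.elim
      | tcho E F => exact hB.elim
      | pri E => exact hB.elim
      | vis E => exact hB.elim
      | hide L E => exact hB.elim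
      | par S E F => exact hB.elim
      | lmerge S E F => exact hB.elim
      | smerge S E F => exact hB.elim

theorem menu_std {E : Expr} (hB : Basic E) (hC : Closed E) (hG : Guarded E)
    {α : Act} {Q' : Expr} :
    StepStd E α Q' ↔ ((α, Q') ∈ menu E ∧ α ≠ Act.delta) :=
  (menu_correct (ug E + 1) E (by omega) hB hC hG).1 α Q'

theorem menu_del {E : Expr} (hB : Basic E) (hC : Closed E) (hG : Guarded E)
    {Q' : Expr} :
    StepDel E Q' ↔ (Act.delta, Q') ∈ menu E :=
  (menu_correct (ug E + 1) E (by omega) hB hC hG).2 Q'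

theorem menu_step {E : Expr} (hB : Basic E) (hC : Closed E) (hG : Guarded E)
    {γ : Act} {Q' : Expr} (h : (γ, Q') ∈ menu E) : Step E γ Q' := by
  unfold Step
  by_cases hγ : γ = Act.delta
  · rw [if_pos hγ]
    subst hγ
    exact (menu_del hB hC hG).mpr h
  · rw [if_neg hγ]
    exact (menu_std hB hC hG).mpr ⟨h, hγ⟩

theorem step_menu {E : Expr} (hB : Basic E) (hC : Closed E) (hG : Guarded E)
    {γ : Act} {Q' : Expr} (h : Step E γ Q') : (γ, Q') ∈ menu E := by
  unfold Step at h
  by_cases hγ : γ = Act.delta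
  · rw [if_pos hγ] at h
    subst hγ
    exact (menu_del hB hC hG).mp h
  · rw [if_neg hγ] at h
    exact ((menu_std hB hC hG).mp h).1

/-! ### Provable-equality algebra for sums -/

def SumA (l : List Expr) : Expr := l.foldr .sum .nil

theorem SumA_nil : SumA [] = .nil := rfl
theorem SumA_cons (x : Expr) (l : List Expr) : SumA (x :: l) = .sum x (SumA l) := rfl

/-- a + (b + c) ≡ b + (a + c) -/
theorem ProvDT.swap (a b c : Expr) :
    ProvDT (.sum a (.sum b c)) (.sum b (.sum a c)) :=
  .trans (.symm (.a2 a b c)) (.trans (.congSum (.a1 a b) (.refl c)) (.a2 b a c))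

theorem ProvDT.absorb_single {x : Expr} {l : List Expr} (h : x ∈ l) :
    ProvDT (.sum x (SumA l)) (SumA l) := by
  induction l with
  | nil => cases h
  | cons y t ih =>
      rcases List.mem_cons.mp h with rfl | h
      · exact .trans (.symm (.a2 x x (SumA t))) (.congSum (.a3 x) (.refl _))
      · exact .trans (ProvDT.swap x y (SumA t)) (.congSum (.refl y) (ih h))

theorem ProvDT.absorb {l₁ l₂ : List Expr} (h : ∀ a ∈ l₁, a ∈ l₂) :
    ProvDT (.sum (SumA l₁) (SumA l₂)) (SumA l₂) := by
  induction l₁ with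
  | nil => exact .trans (.a1 _ _) (.a4 _)
  | cons x t ih =>
      refine .trans (.a2 x (SumA t) (SumA l₂)) ?_
      refine .trans (.congSum (.refl x) (ih (fun a ha => h a (List.mem_cons_of_mem _ ha)))) ?_
      exact ProvDT.absorb_single (h x (List.mem_cons_self))

theorem ProvDT.sum_ext {l₁ l₂ : List Expr} (h₁ : ∀ a ∈ l₁, a ∈ l₂)
    (h₂ : ∀ a ∈ l₂, a ∈ l₁) : ProvDT (SumA l₁) (SumA l₂) := by
  have e₁ : ProvDT (.sum (SumA l₂) (SumA l₁)) (SumA l₁) := ProvDT.absorb h₂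
  have e₂ : ProvDT (.sum (SumA l₁) (SumA l₂)) (SumA l₂) := ProvDT.absorb h₁
  exact .trans (.symm e₁) (.trans (.a1 _ _) e₂)

theorem ProvDT.sum_append (l₁ l₂ : List Expr) :
    ProvDT (.sum (SumA l₁) (SumA l₂)) (SumA (l₁ ++ l₂)) := by
  induction l₁ with
  | nil => exact .trans (.a1 _ _) (.a4 _)
  | cons x t ih =>
      refine .trans (.a2 x (SumA t) (SumA l₂)) ?_
      exact .congSum (.refl x) ih

/-- prefix-expression of a menu entry -/
def pf (p : Act × Expr) : Expr := .pre p.1 p.2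

theorem ProvDT.pri_distrib (m : List (Act × Expr)) :
    ProvDT (.pri (SumA (m.map pf)))
      (SumA ((m.filter (fun p => decide (p.1 ≠ Act.delta))).map pf)) := by
  induction m with
  | nil => exact .pri1
  | cons p t ih =>
      by_cases hδ : p.1 = Act.delta
      · have : (p :: t).filter (fun p => decide (p.1 ≠ Act.delta))
            = t.filter (fun p => decide (p.1 ≠ Act.delta)) := by
          rw [List.filter_cons]
          simp [hδ]
        rw [this]
        have h1 : ProvDT (Expr.pri (pf p)) Expr.nil := by
          show ProvDT (.pri (.pre p.1 p.2)) Expr.nil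
          rw [hδ]
          exact .pri3 p.2
        exact .trans (.pri4 (pf p) (SumA (t.map pf)))
          (.trans (.congSum h1 ih) (.trans (.a1 _ _) (.a4 _)))
      · have : (p :: t).filter (fun p => decide (p.1 ≠ Act.delta))
            = p :: t.filter (fun p => decide (p.1 ≠ Act.delta)) := by
          rw [List.filter_cons]
          simp [hδ]
        rw [this]
        refine .trans (.pri4 (pf p) (SumA (t.map pf))) ?_
        exact .congSum (.pri2 hδ p.2) ih

theorem ProvDT.prune {m : List (Act × Expr)} {X : Expr} (h : (Act.tau, X) ∈ m) :
    ProvDT (SumA (m.map pf))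
      (SumA ((m.filter (fun p => decide (p.1 ≠ Act.delta))).map pf)) := by
  have hx : (Expr.pre Act.tau X) ∈ m.map pf :=
    List.mem_map.mpr ⟨(Act.tau, X), h, rfl⟩
  have hx' : (Expr.pre Act.tau X) ∈ (m.filter (fun p => decide (p.1 ≠ Act.delta))).map pf :=
    List.mem_map.mpr ⟨(Act.tau, X), List.mem_filter.mpr ⟨h, by simp⟩, rfl⟩
  refine .trans (.symm (ProvDT.absorb_single hx)) ?_
  refine .trans (.pri6 X (SumA (m.map pf))) ?_
  refine .trans (.congSum (.refl _) (ProvDT.pri_distrib m)) ?_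
  exact ProvDT.absorb_single hx'

/-- Head normal form: every guarded closed basic process provably equals the
sum of its menu. -/
theorem hnf : ∀ N E, ug E < N → Basic E → Closed E → Guarded E →
    ProvDT E (SumA ((menu E).map pf)) := by
  intro N
  induction N with
  | zero => omega
  | succ N ih =>
      intro E hug hB hC hG
      cases E with
      | nil => rw [menu_nil]; exact .refl _
      | var m => exact absurd (show free (.var m) m from rfl) (hC m)
      | pre γ E =>
          rw [menu_pre]
          exact .symm (.a4 _)
      | recur x A =>
          have hBs : Basic (subst A x (.recur x A)) := basic_subst hB hB
          have hCs : Closed (subst A x (.recur x A)) :=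
            closed_subst (fun y hy => by
              by_contra hyx
              exact hC y ⟨hyx, hy⟩) hC
          have hGs : Guarded (subst A x (.recur x A)) := guarded_subst hG.2 hG hC
          have hugs : ug (subst A x (.recur x A)) < N := by
            rw [ug_subst (GVar_not_FUVar hG.1)]
            simp only [ug] at hug
            omega
          rw [menu_recur hG.1]
          exact .trans (.rec1 x A) (ih _ hugs hBs hCs hGs)
      | sum A B =>
          have hugA : ug A < N := by simp only [ug] at hug; omega
          have hugB : ug B < N := by simp only [ug] at hug; omega
          have hCA : Closed A := fun y hy => hC y (Or.inl hy)
          have hCB : Closed B := fun y hy => hC y (Or.inr hy)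
          have ihA := ih A hugA hB.1 hCA hG.1
          have ihB := ih B hugB hB.2 hCB hG.2
          have step1 : ProvDT (.sum A B) (SumA ((menu A).map pf ++ (menu B).map pf)) :=
            .trans (.congSum ihA ihB) (ProvDT.sum_append _ _)
          rw [menu_sum]
          -- case analysis on whether either side has a τ
          by_cases hτA : hasTau (menu A)
          · -- menu A has a τ, hence (exclusion) no δ in menu A
            obtain ⟨⟨α, X⟩, hmem, hα⟩ := hτA
            cases hα
            have hexclA : ∀ p ∈ menu A, p.1 ≠ Act.delta := by
              rintro ⟨γ, Y⟩ hp rfl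
              have hdel : StepDel A Y := (menu_del hB.1 hCA hG.1).mpr hp
              have hct : CanTau A := ⟨X, (menu_std hB.1 hCA hG.1).mpr ⟨hmem, by simp⟩⟩
              exact no_del_of_tau hdel hct
            have hτA' : hasTau (menu A) := ⟨(Act.tau, X), hmem, rfl⟩
            rw [if_pos hτA']
            have hprune : ProvDT (SumA ((menu A ++ menu B).map pf))
                (SumA (((menu A ++ menu B).filter (fun p => decide (p.1 ≠ Act.delta))).map pf)) :=
              ProvDT.prune (List.mem_append.mpr (Or.inl hmem))
            rw [List.map_append] at hprune
            refine .trans (.trans step1 hprune) ?_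
            simp only [List.map_append]
            apply ProvDT.sum_ext
            · intro a ha
              rw [List.mem_map] at ha
              obtain ⟨p, hp, rfl⟩ := ha
              rw [List.mem_filter, List.mem_append, decide_eq_true_eq] at hp
              obtain ⟨hp1 | hp1, hp2⟩ := hp
              · exact List.mem_append.mpr (Or.inl
                  (List.mem_map.mpr ⟨p, List.mem_filter.mpr ⟨hp1, by simpa using hp2⟩, rfl⟩))
              · refine List.mem_append.mpr (Or.inr (List.mem_append.mpr (Or.inl
                  (List.mem_map.mpr ⟨p, List.mem_filter.mpr ⟨hp1, by simpa using hp2⟩, rfl⟩))))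
            · intro a ha
              rcases List.mem_append.mp ha with ha | ha
              · rw [List.mem_map] at ha
                obtain ⟨p, hp, rfl⟩ := ha
                rw [List.mem_filter] at hp
                exact List.mem_map.mpr ⟨p, List.mem_filter.mpr
                  ⟨List.mem_append.mpr (Or.inl hp.1), hp.2⟩, rfl⟩
              · rcases List.mem_append.mp ha with ha | ha
                · rw [List.mem_map] at ha
                  obtain ⟨p, hp, rfl⟩ := ha
                  rw [List.mem_filter] at hp
                  exact List.mem_map.mpr ⟨p, List.mem_filter.mpr
                    ⟨List.mem_append.mpr (Or.inr hp.1), hp.2⟩, rfl⟩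
                · rcases List.mem_append.mp ha with ha | ha
                  · by_cases hc : hasTau (menu B)
                    · rw [if_pos hc] at ha; cases ha
                    · rw [if_neg hc] at ha
                      rw [List.mem_map] at ha
                      obtain ⟨p, hp, rfl⟩ := ha
                      rw [List.mem_filter, decide_eq_true_eq] at hp
                      exact absurd hp.2 (hexclA p hp.1)
                  · simp at ha
          · by_cases hτB : hasTau (menu B)
            · -- menu B has a τ, no δ in menu B
              obtain ⟨⟨α, X⟩, hmem, hα⟩ := hτB
              cases hα
              have hexclB : ∀ p ∈ menu B, p.1 ≠ Act.delta := by
                rintro ⟨γ, Y⟩ hp rfl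
                have hdel : StepDel B Y := (menu_del hB.2 hCB hG.2).mpr hp
                have hct : CanTau B := ⟨X, (menu_std hB.2 hCB hG.2).mpr ⟨hmem, by simp⟩⟩
                exact no_del_of_tau hdel hct
              have hτB' : hasTau (menu B) := ⟨(Act.tau, X), hmem, rfl⟩
              rw [if_pos hτB', if_neg hτA]
              have hprune : ProvDT (SumA ((menu A ++ menu B).map pf))
                  (SumA (((menu A ++ menu B).filter
                    (fun p => decide (p.1 ≠ Act.delta))).map pf)) :=
                ProvDT.prune (List.mem_append.mpr (Or.inr hmem))
              rw [List.map_append] at hprune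
              refine .trans (.trans step1 hprune) ?_
              simp only [List.map_append]
              apply ProvDT.sum_ext
              · intro a ha
                rw [List.mem_map] at ha
                obtain ⟨p, hp, rfl⟩ := ha
                rw [List.mem_filter, List.mem_append, decide_eq_true_eq] at hp
                obtain ⟨hp1 | hp1, hp2⟩ := hp
                · exact List.mem_append.mpr (Or.inl
                    (List.mem_map.mpr ⟨p, List.mem_filter.mpr ⟨hp1, by simpa using hp2⟩, rfl⟩))
                · exact List.mem_append.mpr (Or.inr (List.mem_append.mpr (Or.inl
                    (List.mem_map.mpr ⟨p, List.mem_filter.mpr ⟨hp1, by simpa using hp2⟩, rfl⟩))))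
              · intro a ha
                rcases List.mem_append.mp ha with ha | ha
                · rw [List.mem_map] at ha
                  obtain ⟨p, hp, rfl⟩ := ha
                  rw [List.mem_filter] at hp
                  exact List.mem_map.mpr ⟨p, List.mem_filter.mpr
                    ⟨List.mem_append.mpr (Or.inl hp.1), hp.2⟩, rfl⟩
                · rcases List.mem_append.mp ha with ha | ha
                  · rw [List.mem_map] at ha
                    obtain ⟨p, hp, rfl⟩ := ha
                    rw [List.mem_filter] at hp
                    exact List.mem_map.mpr ⟨p, List.mem_filter.mpr
                      ⟨List.mem_append.mpr (Or.inr hp.1), hp.2⟩, rfl⟩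
                  · rcases List.mem_append.mp ha with ha | ha
                    · simp at ha
                    · rw [List.mem_map] at ha
                      obtain ⟨p, hp, rfl⟩ := ha
                      rw [List.mem_filter, decide_eq_true_eq] at hp
                      exact absurd hp.2 (hexclB p hp.1)
            · -- neither side has τ: everything is kept, same membership
              rw [if_neg hτA, if_neg hτB]
              refine .trans step1 ?_
              simp only [List.map_append]
              apply ProvDT.sum_ext
              · intro a ha
                rcases List.mem_append.mp ha with ha | ha <;>
                  (rw [List.mem_map] at ha
                   obtain ⟨p, hp, rfl⟩ := ha)
                · by_cases hδ : p.1 = Act.delta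
                  · refine List.mem_append.mpr (Or.inr (List.mem_append.mpr (Or.inr
                      (List.mem_append.mpr (Or.inl ?_)))))
                    exact List.mem_map.mpr ⟨p, List.mem_filter.mpr ⟨hp, by simpa using hδ⟩, rfl⟩
                  · exact List.mem_append.mpr (Or.inl
                      (List.mem_map.mpr ⟨p, List.mem_filter.mpr ⟨hp, by simpa using hδ⟩, rfl⟩))
                · by_cases hδ : p.1 = Act.delta
                  · refine List.mem_append.mpr (Or.inr (List.mem_append.mpr (Or.inr
                      (List.mem_append.mpr (Or.inr ?_)))))
                    exact List.mem_map.mpr ⟨p, List.mem_filter.mpr ⟨hp, by simpa using hδ⟩, rfl⟩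
                  · exact List.mem_append.mpr (Or.inr (List.mem_append.mpr (Or.inl
                      (List.mem_map.mpr ⟨p, List.mem_filter.mpr ⟨hp, by simpa using hδ⟩, rfl⟩))))
              · intro a ha
                rcases List.mem_append.mp ha with ha | ha
                · rw [List.mem_map] at ha
                  obtain ⟨p, hp, rfl⟩ := ha
                  rw [List.mem_filter] at hp
                  exact List.mem_append.mpr (Or.inl (List.mem_map.mpr ⟨p, hp.1, rfl⟩))
                · rcases List.mem_append.mp ha with ha | ha
                  · rw [List.mem_map] at ha
                    obtain ⟨p, hp, rfl⟩ := ha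
                    rw [List.mem_filter] at hp
                    exact List.mem_append.mpr (Or.inr (List.mem_map.mpr ⟨p, hp.1, rfl⟩))
                  · rcases List.mem_append.mp ha with ha | ha
                    · rw [List.mem_map] at ha
                      obtain ⟨p, hp, rfl⟩ := ha
                      rw [List.mem_filter] at hp
                      exact List.mem_append.mpr (Or.inl (List.mem_map.mpr ⟨p, hp.1, rfl⟩))
                    · rw [List.mem_map] at ha
                      obtain ⟨p, hp, rfl⟩ := ha
                      rw [List.mem_filter] at hp
                      exact List.mem_append.mpr (Or.inr (List.mem_map.mpr ⟨p, hp.1, rfl⟩))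
      | one => exact hB.elim
      | tpre γ E => exact hB.elim
      | tcho E F => exact hB.elim
      | pri E => exact hB.elim
      | vis E => exact hB.elim
      | hide L E => exact hB.elim
      | par S E F => exact hB.elim
      | lmerge S E F => exact hB.elim
      | smerge S E F => exact hB.elim

/-! ### Assembly: the state list and the equation set -/

open Classical in
noncomputable def states (P : Expr) : List Expr :=
  P :: (D P (fun y => .var y)).filter (fun Q => decide (Reach P Q))

theorem states_len_pos (P : Expr) : 0 < (states P).length := by
  simp [states]

theorem mem_states_self (P : Expr) : P ∈ states P := List.mem_cons_self

theorem mem_states_reach {P Q : Expr} (h : Q ∈ states P) : Reach P Q := by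
  rcases List.mem_cons.mp h with rfl | h
  · exact Relation.ReflTransGen.refl
  · have := (List.mem_filter.mp h).2
    simpa using this

theorem mem_states_D {P Q : Expr} (h : Q ∈ states P) : Q ∈ D P (fun y => .var y) := by
  rcases List.mem_cons.mp h with rfl | h
  · have := msubst_mem_D Q (fun y => .var y)
    rwa [msubst_id] at this
  · exact (List.mem_filter.mp h).1

theorem mem_states_CGB {P Q : Expr} (hB : Basic P) (hcl : Closed P) (hG : Guarded P)
    (h : Q ∈ states P) : Basic Q ∧ Closed Q ∧ Guarded Q :=
  reach_CGB (mem_states_reach h) hB hcl hG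

theorem states_closed {P : Expr} (hB : Basic P) (hcl : Closed P) (hG : Guarded P)
    {Q : Expr} (hQ : Q ∈ states P) {γ : Act} {Q' : Expr} (hstep : Step Q γ Q') :
    Q' ∈ states P := by
  obtain ⟨hb, hc, hg⟩ := mem_states_CGB hB hcl hG hQ
  have hDstep : ∀ R ∈ D P (fun y => .var y), ∀ R', SubDer R R' → R' ∈ D P (fun y => .var y) := by
    intro R hR R' h
    rcases D_closure P _ (fun y => Or.inl rfl) (fun y hy => absurd hy (hcl y)) R hR R' h with
      h' | ⟨y, h1, -⟩
    · exact h'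
    · exact absurd h1 (hcl y)
  have hD' : Q' ∈ D P (fun y => .var y) := by
    have htg := step_subder hstep hb
    clear hstep
    induction htg with
    | single h => exact hDstep _ (mem_states_D hQ) _ h
    | tail h1 h2 ih => exact hDstep _ ih _ h2
  have hR' : Reach P Q' := (mem_states_reach hQ).tail ⟨γ, hstep⟩
  exact List.mem_cons_of_mem _ (List.mem_filter.mpr ⟨hD', by simpa using hR'⟩)

noncomputable def idx (P : Expr) (Q : Expr) : Fin (states P).length :=
  if h : Q ∈ states P then (List.mem_iff_get.mp h).choose else ⟨0, states_len_pos P⟩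

theorem get_idx {P Q : Expr} (h : Q ∈ states P) : (states P).get (idx P Q) = Q := by
  rw [idx, dif_pos h]
  exact (List.mem_iff_get.mp h).choose_spec

theorem filter_length_le_one {α : Type*} {l : List α} (hnd : l.Nodup) (pred : α → Bool)
    (h : ∀ a ∈ l.filter pred, ∀ b ∈ l.filter pred, a = b) : (l.filter pred).length ≤ 1 := by
  rcases hf : l.filter pred with - | ⟨a, - | ⟨b, t⟩⟩
  · simp
  · simp
  · exfalso
    have hnd' : (l.filter pred).Nodup := hnd.filter pred
    rw [hf] at hnd'
    have ha : a ∈ l.filter pred := by rw [hf]; exact List.mem_cons_self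
    have hb : b ∈ l.filter pred := by
      rw [hf]; exact List.mem_cons_of_mem _ (List.mem_cons_self)
    have hab : a = b := h a ha b hb
    exact (List.nodup_cons.mp hnd').1 (hab ▸ (List.mem_cons_self (a := b) (l := t)))

end Aux

/-- time-deterministic representability of guarded basic
processes via time-deterministic, prioritized, standard, guarded, closed
equation sets. -/
theorem td_representability (P : Expr)
    (hB : Basic P) (hcl : Closed P) (hG : Guarded P) (hT : TimeDet P) :
    ∃ (n : ℕ) (hn : 0 < n) (S : StdEqSet n),
      TimeDetSet S ∧ Prioritized S ∧ EqGuarded S ∧ ClosedSet S ∧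
      ProvSatDT hn P S := by
  classical
  set n := (states P).length with hn_def
  have hn : 0 < n := states_len_pos P
  set Es : Fin n → Expr := fun i => (states P).get i with hEs_def
  have hEs_mem : ∀ i : Fin n, Es i ∈ states P := fun i => (states P).get_mem i
  have hEs_CGB : ∀ i : Fin n, Basic (Es i) ∧ Closed (Es i) ∧ Guarded (Es i) :=
    fun i => mem_states_CGB hB hcl hG (hEs_mem i)
  set presFn : Fin n → List (Act × Fin n) :=
    fun i => ((menu (Es i)).map (fun p => (p.1, idx P p.2))).dedup with hpresFn_def
  -- successors of states are states
  have hsucc : ∀ (i : Fin n) (γ : Act) (Q' : Expr),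
      (γ, Q') ∈ menu (Es i) → Q' ∈ states P := by
    intro i γ Q' hm
    obtain ⟨hb, hc, hg⟩ := hEs_CGB i
    exact states_closed hB hcl hG (hEs_mem i) (menu_step hb hc hg hm)
  -- membership characterization of the equations
  have hpres : ∀ (i : Fin n) (γ : Act) (j : Fin n),
      (γ, j) ∈ presFn i ↔ ∃ Q', (γ, Q') ∈ menu (Es i) ∧ j = idx P Q' := by
    intro i γ j
    rw [hpresFn_def]
    simp only [List.mem_dedup, List.mem_map]
    constructor
    · rintro ⟨⟨γ', Q'⟩, hm, he⟩
      rw [Prod.mk.injEq] at he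
      obtain ⟨rfl, rfl⟩ := he
      exact ⟨Q', hm, rfl⟩
    · rintro ⟨Q', hm, rfl⟩
      exact ⟨(γ, Q'), hm, rfl⟩
  refine ⟨n, hn, ⟨presFn, fun _ => [], fun i w hw => absurd hw List.not_mem_nil⟩,
    ?_, ?_, ?_, ?_, ?_⟩
  · -- TimeDetSet
    intro i
    refine filter_length_le_one (List.nodup_dedup _) _ ?_
    rintro ⟨γa, ja⟩ ha ⟨γb, jb⟩ hb'
    rw [List.mem_filter] at ha hb'
    have hγa : γa = Act.delta := by simpa using ha.2
    have hγb : γb = Act.delta := by simpa using hb'.2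
    subst hγa; subst hγb
    obtain ⟨Qa, hma, rfl⟩ := (hpres i Act.delta ja).mp ha.1
    obtain ⟨Qb, hmb, rfl⟩ := (hpres i Act.delta jb).mp hb'.1
    obtain ⟨hb, hc, hg⟩ := hEs_CGB i
    have hSa : Step (Es i) Act.delta Qa := menu_step hb hc hg hma
    have hSb : Step (Es i) Act.delta Qb := menu_step hb hc hg hmb
    have := hT (Es i) (mem_states_reach (hEs_mem i)) Qa Qb hSa hSb
    rw [this]
  · -- Prioritized
    rintro i ⟨j, hj⟩ k hk
    obtain ⟨Qτ, hmτ, -⟩ := (hpres i Act.tau j).mp hj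
    obtain ⟨Qδ, hmδ, -⟩ := (hpres i Act.delta k).mp hk
    obtain ⟨hb, hc, hg⟩ := hEs_CGB i
    have hstd : StepStd (Es i) Act.tau Qτ := (menu_std hb hc hg).mpr ⟨hmτ, by simp⟩
    have hdel : StepDel (Es i) Qδ := (menu_del hb hc hg).mpr hmδ
    exact no_del_of_tau hdel ⟨Qτ, hstd⟩
  · -- EqGuarded
    intro i hcyc
    have hedge : ∀ a b : Fin n, (Act.tau, b) ∈ presFn a → td (Es b) < td (Es a) := by
      intro a b hab
      obtain ⟨Q', hm, rfl⟩ := (hpres a Act.tau b).mp hab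
      obtain ⟨hb, hc, hg⟩ := hEs_CGB a
      have hstd : StepStd (Es a) Act.tau Q' := (menu_std hb hc hg).mpr ⟨hm, by simp⟩
      have hmem' : Q' ∈ states P := hsucc a Act.tau Q' hm
      have : Es (idx P Q') = Q' := get_idx hmem'
      rw [this]
      exact td_step hstd hb hc hg
    have hlt : ∀ a b : Fin n,
        Relation.TransGen (fun i j : Fin n => (Act.tau, j) ∈ presFn i) a b →
        td (Es b) < td (Es a) := by
      intro a b h
      induction h with
      | single h => exact hedge _ _ h
      | tail h1 h2 ih => exact lt_trans (hedge _ _ h2) ih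
    exact absurd (hlt i i hcyc) (lt_irrefl _)
  · -- ClosedSet
    intro i
    rfl
  · -- ProvSatDT
    refine ⟨Es, rfl, ?_, ?_⟩
    · intro i x hfree
      exact absurd hfree ((hEs_CGB i).2.1 x)
    · intro i
      obtain ⟨hb, hc, hg⟩ := hEs_CGB i
      have h1 : ProvDT (Es i) (SumA ((menu (Es i)).map pf)) :=
        hnf (ug (Es i) + 1) (Es i) (by omega) hb hc hg
      have hIB : instBody ⟨presFn, fun _ => [], fun i w hw => absurd hw List.not_mem_nil⟩
          Es i = SumA ((presFn i).map (fun p => Expr.pre p.1 (Es p.2))) := by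
        simp [instBody, SumA, List.foldr_map]
      rw [hIB]
      refine .trans h1 (ProvDT.sum_ext ?_ ?_)
      · intro a ha
        rw [List.mem_map] at ha
        obtain ⟨p, hp, rfl⟩ := ha
        refine List.mem_map.mpr ⟨(p.1, idx P p.2), ?_, ?_⟩
        · rw [hpresFn_def]
          rw [List.mem_dedup]
          exact List.mem_map.mpr ⟨p, hp, rfl⟩
        · show Expr.pre p.1 (Es (idx P p.2)) = pf p
          rw [show Es (idx P p.2) = p.2 from get_idx (hsucc i p.1 p.2 (by
            rcases p with ⟨γ, Q'⟩; exact hp))]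
          rfl
      · intro a ha
        rw [List.mem_map] at ha
        obtain ⟨q, hq, rfl⟩ := ha
        rcases q with ⟨γq, jq⟩
        obtain ⟨Q', hm, rfl⟩ := (hpres i γq jq).mp hq
        refine List.mem_map.mpr ⟨(γq, Q'), hm, ?_⟩
        show pf (γq, Q') = Expr.pre γq (Es (idx P Q'))
        rw [show Es (idx P Q') = Q' from get_idx (hsucc i γq Q' hm)]
        rfl

end DTCalc
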